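/- arXiv:1303.3460 — 9 statements merged into one kernel-verified Lean document; each statement's English description precedes it below -/
import Mathlib

section
/- Let n ≥ 1 and k ≥ 4 be natural numbers. Let A be a real-valued family indexed by k-tuples of indices in {1,…,n}, invariant under every permutation of its first k−2 arguments and under swapping its last two arguments, and satisfying the symmetrization condition: for every tuple (p₁,…,p_k) one has Σ_{1≤i<j≤k} A(p₁,…,p̂ᵢ,…,p̂ⱼ,…,p_k, pᵢ, pⱼ) = 0, where the hats mean that the entries pᵢ, pⱼ are removed from their positions and placed (in this order) as the last two arguments. Define T := Σ_p A(p)² (sum over all k-tuples p), M := Σ_{K,a,b,c} A(K,a,b,c)·A(K,c,a,b) (sum over all (k−3)-tuples K and indices a,b,c), and N := Σ_{K,a,b,c,d} A(K,c,d,a,b)·A(K,a,b,c,d) (sum over all (k−4)-tuples K and indices a,b,c,d). Then 2·T + (k−2)·N ≥ 0 and T + N − 2·M ≥ 0. -/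
/-- The order-preserving embedding of `Fin (k-2)` into `Fin k` avoiding the positions
`i` and `j` (intended for `i < j`). -/
def dropPair {k : ℕ} (i j : Fin k) (m : Fin (k - 2)) : Fin k :=
  if (m : ℕ) < (i : ℕ) then ⟨(m : ℕ), by have := m.isLt; omega⟩
  else if (m : ℕ) + 1 < (j : ℕ) then ⟨(m : ℕ) + 1, by have := m.isLt; omega⟩
  else ⟨(m : ℕ) + 2, by have := m.isLt; omega⟩

/-- The tuple obtained from `p` by removing the entries at positions `i` and `j`
(keeping the order of the remaining entries) and placing `p i`, `p j` (in this order)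
as the last two entries. -/
def hatTuple {n k : ℕ} (p : Fin k → Fin n) (i j : Fin k) : Fin k → Fin n :=
  fun m =>
    if h : (m : ℕ) < k - 2 then p (dropPair i j ⟨(m : ℕ), h⟩)
    else if (m : ℕ) = k - 2 then p i
    else p j

/-- The `k`-tuple whose first `k-3` entries are given by `K` and whose last three
entries are `a`, `b`, `c` (in this order). -/
def padEnd3 {n k : ℕ} (K : Fin (k - 3) → Fin n) (a b c : Fin n) : Fin k → Fin n :=
  fun m =>
    if h : (m : ℕ) < k - 3 then K ⟨(m : ℕ), h⟩
    else if (m : ℕ) = k - 3 then a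
    else if (m : ℕ) = k - 2 then b
    else c

/-- The `k`-tuple whose first `k-4` entries are given by `K` and whose last four
entries are `a`, `b`, `c`, `d` (in this order). -/
def padEnd4 {n k : ℕ} (K : Fin (k - 4) → Fin n) (a b c d : Fin n) : Fin k → Fin n :=
  fun m =>
    if h : (m : ℕ) < k - 4 then K ⟨(m : ℕ), h⟩
    else if (m : ℕ) = k - 4 then a
    else if (m : ℕ) = k - 3 then b
    else if (m : ℕ) = k - 2 then c
    else d

set_option linter.unusedTactic false
set_option linter.unreachableTactic false
set_option linter.unnecessarySeqFocus false
set_option linter.unusedVariables false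



set_option linter.unusedTactic false
set_option linter.unreachableTactic false
set_option linter.unnecessarySeqFocus false


-- ns

variable {n k : ℕ}

/-- Reindexing a sum over tuples by precomposition with a permutation. -/
lemma sum_reindex (f : (Fin k → Fin n) → ℝ) (σ : Equiv.Perm (Fin k)) :
    ∑ p : Fin k → Fin n, f (fun m => p (σ m)) = ∑ p : Fin k → Fin n, f p := by
  apply Fintype.sum_bijective (fun p : Fin k → Fin n => fun m => p (σ m))
  · constructor
    · intro p q h
      funext m
      have := congrFun h (σ.symm m)
      simpa using this
    · intro q
      exact ⟨fun m => q (σ.symm m), by funext m; simp⟩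
  · intro p
    rfl

def Fc (A : (Fin k → Fin n) → ℝ) (π : Equiv.Perm (Fin k)) : ℝ :=
  ∑ p : Fin k → Fin n, A p * A (fun m => p (π m))

def Ainv (A : (Fin k → Fin n) → ℝ) (σ : Equiv.Perm (Fin k)) : Prop :=
  ∀ p : Fin k → Fin n, A (fun m => p (σ m)) = A p

lemma Ainv.mul {A : (Fin k → Fin n) → ℝ} {σ₁ σ₂ : Equiv.Perm (Fin k)}
    (h₁ : Ainv A σ₁) (h₂ : Ainv A σ₂) : Ainv A (σ₁ * σ₂) := by
  intro p
  have h := (h₂ (fun m' => p (σ₁ m'))).trans (h₁ p)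
  rw [← h]
  apply congrArg A
  funext m
  simp [Equiv.Perm.mul_apply]

lemma Ainv.inv {A : (Fin k → Fin n) → ℝ} {σ : Equiv.Perm (Fin k)}
    (h : Ainv A σ) : Ainv A σ⁻¹ := by
  intro p
  have := h (fun m => p (σ⁻¹ m))
  rw [← this]
  congr 1
  funext m
  simp

lemma Fc_left {A : (Fin k → Fin n) → ℝ} {σ : Equiv.Perm (Fin k)} (h : Ainv A σ)
    (π : Equiv.Perm (Fin k)) : Fc A (σ * π) = Fc A π := by
  unfold Fc
  rw [← sum_reindex (fun p => A p * A (fun m => p (π m))) σ]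
  apply Finset.sum_congr rfl
  intro p _
  have e1 : A (fun m => p (σ m)) = A p := h p
  have e2 : A (fun m => (fun m' => p (σ m')) (π m)) = A (fun m => p ((σ * π) m)) := by
    apply congrArg A; funext m; simp [Equiv.Perm.mul_apply]
  rw [e1, e2]

lemma Fc_right {A : (Fin k → Fin n) → ℝ} {σ : Equiv.Perm (Fin k)} (h : Ainv A σ)
    (π : Equiv.Perm (Fin k)) : Fc A (π * σ) = Fc A π := by
  unfold Fc
  apply Finset.sum_congr rfl
  intro p _
  congr 1
  exact h (fun m => p (π m))

lemma Fc_inv {A : (Fin k → Fin n) → ℝ} (π : Equiv.Perm (Fin k)) :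
    Fc A π⁻¹ = Fc A π := by
  unfold Fc
  rw [← sum_reindex (fun p => A p * A (fun m => p (π⁻¹ m))) π]
  apply Finset.sum_congr rfl
  intro p _
  rw [mul_comm]
  congr 1
  apply congrArg A
  funext m
  simp

lemma Fc_key {A : (Fin k → Fin n) → ℝ}
    (hsym₁ : ∀ (p : Fin k → Fin n) (σ : Equiv.Perm (Fin k)),
      (∀ m : Fin k, k - 2 ≤ (m : ℕ) → σ m = m) → A (fun m => p (σ m)) = A p)
    (π χ : Equiv.Perm (Fin k))
    (h : ∀ m : Fin k, k - 2 ≤ (m : ℕ) → (π * χ⁻¹) m = m) :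
    Fc A π = Fc A χ := by
  have hσ : Ainv A (π * χ⁻¹) := fun p => hsym₁ p _ h
  have hπ : π = (π * χ⁻¹) * χ := by group
  rw [hπ, Fc_left hσ]

-- end ns


-- ns

open Equiv

variable {α : Type*} [DecidableEq α]

section
variable {a b c d : α}

lemma tau_sq (hab : a ≠ b) (hac : a ≠ c) (had : a ≠ d)
    (hbc : b ≠ c) (hbd : b ≠ d) (hcd : c ≠ d) :
    (swap a c * swap b d) * (swap a c * swap b d) = 1 := by
  ext x
  rcases eq_or_ne x a with rfl | hxa
  · simp [Equiv.swap_apply_def, hab, hac, had, hbc, hbd, hcd,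
      hab.symm, hac.symm, had.symm, hbc.symm, hbd.symm, hcd.symm]
  rcases eq_or_ne x b with rfl | hxb
  · simp [Equiv.swap_apply_def, hab, hac, had, hbc, hbd, hcd,
      hab.symm, hac.symm, had.symm, hbc.symm, hbd.symm, hcd.symm]
  rcases eq_or_ne x c with rfl | hxc
  · simp [Equiv.swap_apply_def, hab, hac, had, hbc, hbd, hcd,
      hab.symm, hac.symm, had.symm, hbc.symm, hbd.symm, hcd.symm]
  rcases eq_or_ne x d with rfl | hxd
  · simp [Equiv.swap_apply_def, hab, hac, had, hbc, hbd, hcd,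
      hab.symm, hac.symm, had.symm, hbc.symm, hbd.symm, hcd.symm]
  · simp [Equiv.swap_apply_def, hxa, hxb, hxc, hxd]

lemma perm_id1 (hab : a ≠ b) (hac : a ≠ c) (had : a ≠ d)
    (hbc : b ≠ c) (hbd : b ≠ d) (hcd : c ≠ d) :
    swap b c * (swap a c * swap b d)
    = swap a b * (swap c d * swap b c) := by
  ext x
  rcases eq_or_ne x a with rfl | hxa
  · simp [Equiv.swap_apply_def, hab, hac, had, hbc, hbd, hcd,
      hab.symm, hac.symm, had.symm, hbc.symm, hbd.symm, hcd.symm]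
  rcases eq_or_ne x b with rfl | hxb
  · simp [Equiv.swap_apply_def, hab, hac, had, hbc, hbd, hcd,
      hab.symm, hac.symm, had.symm, hbc.symm, hbd.symm, hcd.symm]
  rcases eq_or_ne x c with rfl | hxc
  · simp [Equiv.swap_apply_def, hab, hac, had, hbc, hbd, hcd,
      hab.symm, hac.symm, had.symm, hbc.symm, hbd.symm, hcd.symm]
  rcases eq_or_ne x d with rfl | hxd
  · simp [Equiv.swap_apply_def, hab, hac, had, hbc, hbd, hcd,
      hab.symm, hac.symm, had.symm, hbc.symm, hbd.symm, hcd.symm]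
  · simp [Equiv.swap_apply_def, hxa, hxb, hxc, hxd]

lemma perm_id2 (hab : a ≠ b) (hac : a ≠ c) (had : a ≠ d)
    (hbc : b ≠ c) (hbd : b ≠ d) (hcd : c ≠ d) :
    (swap a c * swap b d) * swap b c
    = swap b c * (swap a b * swap c d) := by
  ext x
  rcases eq_or_ne x a with rfl | hxa
  · simp [Equiv.swap_apply_def, hab, hac, had, hbc, hbd, hcd,
      hab.symm, hac.symm, had.symm, hbc.symm, hbd.symm, hcd.symm]
  rcases eq_or_ne x b with rfl | hxb
  · simp [Equiv.swap_apply_def, hab, hac, had, hbc, hbd, hcd,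
      hab.symm, hac.symm, had.symm, hbc.symm, hbd.symm, hcd.symm]
  rcases eq_or_ne x c with rfl | hxc
  · simp [Equiv.swap_apply_def, hab, hac, had, hbc, hbd, hcd,
      hab.symm, hac.symm, had.symm, hbc.symm, hbd.symm, hcd.symm]
  rcases eq_or_ne x d with rfl | hxd
  · simp [Equiv.swap_apply_def, hab, hac, had, hbc, hbd, hcd,
      hab.symm, hac.symm, had.symm, hbc.symm, hbd.symm, hcd.symm]
  · simp [Equiv.swap_apply_def, hxa, hxb, hxc, hxd]

lemma perm_id3 (hab : a ≠ b) (hac : a ≠ c) (had : a ≠ d)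
    (hbc : b ≠ c) (hbd : b ≠ d) (hcd : c ≠ d) :
    (swap a c * swap b d) * (swap b c * (swap a c * swap b d))
    = swap a b * ((swap c d * swap b c) * (swap a b * swap c d)) := by
  ext x
  rcases eq_or_ne x a with rfl | hxa
  · simp [Equiv.swap_apply_def, hab, hac, had, hbc, hbd, hcd,
      hab.symm, hac.symm, had.symm, hbc.symm, hbd.symm, hcd.symm]
  rcases eq_or_ne x b with rfl | hxb
  · simp [Equiv.swap_apply_def, hab, hac, had, hbc, hbd, hcd,
      hab.symm, hac.symm, had.symm, hbc.symm, hbd.symm, hcd.symm]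
  rcases eq_or_ne x c with rfl | hxc
  · simp [Equiv.swap_apply_def, hab, hac, had, hbc, hbd, hcd,
      hab.symm, hac.symm, had.symm, hbc.symm, hbd.symm, hcd.symm]
  rcases eq_or_ne x d with rfl | hxd
  · simp [Equiv.swap_apply_def, hab, hac, had, hbc, hbd, hcd,
      hab.symm, hac.symm, had.symm, hbc.symm, hbd.symm, hcd.symm]
  · simp [Equiv.swap_apply_def, hxa, hxb, hxc, hxd]

end
-- end ns




-- ns

variable {n k : ℕ}

lemma sum_padEnd4 (hk : 4 ≤ k) (f : (Fin k → Fin n) → ℝ) :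
    ∑ K : Fin (k-4) → Fin n, ∑ a : Fin n, ∑ b : Fin n, ∑ c : Fin n, ∑ d : Fin n,
      f (padEnd4 K a b c d) = ∑ p : Fin k → Fin n, f p := by
  have hbij : Function.Bijective
      (fun x : (Fin (k-4) → Fin n) × Fin n × Fin n × Fin n × Fin n =>
        padEnd4 x.1 x.2.1 x.2.2.1 x.2.2.2.1 x.2.2.2.2) := by
    constructor
    · rintro ⟨K, a, b, c, d⟩ ⟨K', a', b', c', d'⟩ h
      simp only [Prod.mk.injEq]
      refine ⟨?_, ?_, ?_, ?_, ?_⟩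
      · funext m
        have := congrFun h ⟨(m : ℕ), by omega⟩
        simpa [padEnd4, m.isLt, dif_pos] using this
      · have := congrFun h ⟨k-4, by omega⟩
        simpa [padEnd4] using this
      · have := congrFun h ⟨k-3, by omega⟩
        have h1 : ¬ (k-3 < k-4) := by omega
        have h2 : ¬ (k-3 = k-4) := by omega
        simpa [padEnd4, h1, h2] using this
      · have := congrFun h ⟨k-2, by omega⟩
        have h1 : ¬ (k-2 < k-4) := by omega
        have h2 : ¬ (k-2 = k-4) := by omega
        have h3 : ¬ (k-2 = k-3) := by omega
        simpa [padEnd4, h1, h2, h3] using this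
      · have := congrFun h ⟨k-1, by omega⟩
        have h1 : ¬ (k-1 < k-4) := by omega
        have h2 : ¬ (k-1 = k-4) := by omega
        have h3 : ¬ (k-1 = k-3) := by omega
        have h4 : ¬ (k-1 = k-2) := by omega
        simpa [padEnd4, h1, h2, h3, h4] using this
    · intro p
      refine ⟨⟨fun m => p ⟨(m : ℕ), by omega⟩, p ⟨k-4, by omega⟩, p ⟨k-3, by omega⟩,
        p ⟨k-2, by omega⟩, p ⟨k-1, by omega⟩⟩, ?_⟩
      funext m
      have hm := m.isLt
      simp only [padEnd4]
      split_ifs with h1 h2 h3 h4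
      case _ => congr 1 <;> (apply Fin.ext; simp only [Fin.val_mk]; omega)
      case _ => congr 1 <;> (apply Fin.ext; simp only [Fin.val_mk]; omega)
      case _ => congr 1 <;> (apply Fin.ext; simp only [Fin.val_mk]; omega)
      case _ => congr 1 <;> (apply Fin.ext; simp only [Fin.val_mk]; omega)
      case _ => congr 1 <;> (apply Fin.ext; simp only [Fin.val_mk]; omega)
  calc ∑ K : Fin (k-4) → Fin n, ∑ a : Fin n, ∑ b : Fin n, ∑ c : Fin n, ∑ d : Fin n,
      f (padEnd4 K a b c d)
      = ∑ x : (Fin (k-4) → Fin n) × Fin n × Fin n × Fin n × Fin n,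
        f (padEnd4 x.1 x.2.1 x.2.2.1 x.2.2.2.1 x.2.2.2.2) := by
        rw [Fintype.sum_prod_type]
        apply Finset.sum_congr rfl; intro K _
        rw [Fintype.sum_prod_type]
        apply Finset.sum_congr rfl; intro a _
        rw [Fintype.sum_prod_type]
        apply Finset.sum_congr rfl; intro b _
        rw [Fintype.sum_prod_type]
    _ = ∑ p : Fin k → Fin n, f p := Fintype.sum_bijective _ hbij _ _ (fun x => rfl)

lemma sum_padEnd3 (hk : 3 ≤ k) (f : (Fin k → Fin n) → ℝ) :
    ∑ K : Fin (k-3) → Fin n, ∑ a : Fin n, ∑ b : Fin n, ∑ c : Fin n,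
      f (padEnd3 K a b c) = ∑ p : Fin k → Fin n, f p := by
  have hbij : Function.Bijective
      (fun x : (Fin (k-3) → Fin n) × Fin n × Fin n × Fin n =>
        padEnd3 x.1 x.2.1 x.2.2.1 x.2.2.2) := by
    constructor
    · rintro ⟨K, a, b, c⟩ ⟨K', a', b', c'⟩ h
      simp only [Prod.mk.injEq]
      refine ⟨?_, ?_, ?_, ?_⟩
      · funext m
        have := congrFun h ⟨(m : ℕ), by omega⟩
        simpa [padEnd3, m.isLt, dif_pos] using this
      · have := congrFun h ⟨k-3, by omega⟩
        simpa [padEnd3] using this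
      · have := congrFun h ⟨k-2, by omega⟩
        have h1 : ¬ (k-2 < k-3) := by omega
        have h2 : ¬ (k-2 = k-3) := by omega
        simpa [padEnd3, h1, h2] using this
      · have := congrFun h ⟨k-1, by omega⟩
        have h1 : ¬ (k-1 < k-3) := by omega
        have h2 : ¬ (k-1 = k-3) := by omega
        have h3 : ¬ (k-1 = k-2) := by omega
        simpa [padEnd3, h1, h2, h3] using this
    · intro p
      refine ⟨⟨fun m => p ⟨(m : ℕ), by omega⟩, p ⟨k-3, by omega⟩,
        p ⟨k-2, by omega⟩, p ⟨k-1, by omega⟩⟩, ?_⟩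
      funext m
      have hm := m.isLt
      simp only [padEnd3]
      split_ifs with h1 h2 h3
      case _ => congr 1 <;> (apply Fin.ext; simp only [Fin.val_mk]; omega)
      case _ => congr 1 <;> (apply Fin.ext; simp only [Fin.val_mk]; omega)
      case _ => congr 1 <;> (apply Fin.ext; simp only [Fin.val_mk]; omega)
      case _ => congr 1 <;> (apply Fin.ext; simp only [Fin.val_mk]; omega)
  calc ∑ K : Fin (k-3) → Fin n, ∑ a : Fin n, ∑ b : Fin n, ∑ c : Fin n,
      f (padEnd3 K a b c)
      = ∑ x : (Fin (k-3) → Fin n) × Fin n × Fin n × Fin n,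
        f (padEnd3 x.1 x.2.1 x.2.2.1 x.2.2.2) := by
        rw [Fintype.sum_prod_type]
        apply Finset.sum_congr rfl; intro K _
        rw [Fintype.sum_prod_type]
        apply Finset.sum_congr rfl; intro a _
        rw [Fintype.sum_prod_type]
    _ = ∑ p : Fin k → Fin n, f p := Fintype.sum_bijective _ hbij _ _ (fun x => rfl)

-- end ns
section T4
variable {n k : ℕ}

open Equiv

def ptA (k : ℕ) (hk : 4 ≤ k) : Fin k := ⟨k-4, by omega⟩
def ptB (k : ℕ) (hk : 4 ≤ k) : Fin k := ⟨k-3, by omega⟩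
def ptC (k : ℕ) (hk : 4 ≤ k) : Fin k := ⟨k-2, by omega⟩
def ptD (k : ℕ) (hk : 4 ≤ k) : Fin k := ⟨k-1, by omega⟩

variable (hk : 4 ≤ k)

lemma hAB : ptA k hk ≠ ptB k hk := by simp [ptA, ptB, Fin.ext_iff]; omega
lemma hAC : ptA k hk ≠ ptC k hk := by simp [ptA, ptC, Fin.ext_iff]; omega
lemma hAD : ptA k hk ≠ ptD k hk := by simp [ptA, ptD, Fin.ext_iff]; omega
lemma hBC : ptB k hk ≠ ptC k hk := by simp [ptB, ptC, Fin.ext_iff]; omega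
lemma hBD : ptB k hk ≠ ptD k hk := by simp [ptB, ptD, Fin.ext_iff]; omega
lemma hCD : ptC k hk ≠ ptD k hk := by simp [ptC, ptD, Fin.ext_iff]; omega
lemma ptA_val : ((ptA k hk : Fin k) : ℕ) = k-4 := rfl
lemma ptB_val : ((ptB k hk : Fin k) : ℕ) = k-3 := rfl
lemma ptC_val : ((ptC k hk : Fin k) : ℕ) = k-2 := rfl
lemma ptD_val : ((ptD k hk : Fin k) : ℕ) = k-1 := rfl

def tauP (k : ℕ) (hk : 4 ≤ k) : Perm (Fin k) := swap (ptA k hk) (ptC k hk) * swap (ptB k hk) (ptD k hk)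
def gamP (k : ℕ) (hk : 4 ≤ k) : Perm (Fin k) := swap (ptB k hk) (ptC k hk)
def swP (k : ℕ) (hk : 4 ≤ k) : Perm (Fin k) := swap (ptC k hk) (ptD k hk)
def wwP (k : ℕ) (hk : 4 ≤ k) : Perm (Fin k) := swap (ptA k hk) (ptB k hk)
def rhoP (k : ℕ) (hk : 4 ≤ k) : Perm (Fin k) := swP k hk * gamP k hk

lemma tau_invol : ∀ x, tauP k hk (tauP k hk x) = x := by
  have h := tau_sq (hAB hk) (hAC hk) (hAD hk) (hBC hk) (hBD hk) (hCD hk)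
  intro x
  have := congrArg (fun σ : Perm (Fin k) => σ x) h
  simpa [tauP, Equiv.Perm.mul_apply] using this

-- value computations
lemma tau_at_A : tauP k hk (ptA k hk) = ptC k hk := by
  simp [tauP, Equiv.Perm.mul_apply,
    Equiv.swap_apply_of_ne_of_ne (hAB hk) (hAD hk), Equiv.swap_apply_left]
lemma tau_at_B : tauP k hk (ptB k hk) = ptD k hk := by
  rw [tauP, Equiv.Perm.mul_apply, Equiv.swap_apply_left,
    Equiv.swap_apply_of_ne_of_ne (Ne.symm (hAD hk)) (Ne.symm (hCD hk))]
lemma tau_at_C : tauP k hk (ptC k hk) = ptA k hk := by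
  rw [tauP, Equiv.Perm.mul_apply,
    Equiv.swap_apply_of_ne_of_ne (Ne.symm (hBC hk)) (hCD hk), Equiv.swap_apply_right]
lemma tau_at_D : tauP k hk (ptD k hk) = ptB k hk := by
  rw [tauP, Equiv.Perm.mul_apply, Equiv.swap_apply_right,
    Equiv.swap_apply_of_ne_of_ne (Ne.symm (hAB hk)) (hBC hk)]
lemma tau_at_lt {m : Fin k} (h : (m : ℕ) < k - 4) : tauP k hk m = m := by
  have h1 : m ≠ ptA k hk := by simp [ptA, Fin.ext_iff]; omega
  have h2 : m ≠ ptB k hk := by simp [ptB, Fin.ext_iff]; omega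
  have h3 : m ≠ ptC k hk := by simp [ptC, Fin.ext_iff]; omega
  have h4 : m ≠ ptD k hk := by simp [ptD, Fin.ext_iff]; omega
  rw [tauP, Equiv.Perm.mul_apply, Equiv.swap_apply_of_ne_of_ne h2 h4,
    Equiv.swap_apply_of_ne_of_ne h1 h3]

lemma rho_at_B : rhoP k hk (ptB k hk) = ptD k hk := by
  rw [rhoP, Equiv.Perm.mul_apply, gamP, Equiv.swap_apply_left, swP, Equiv.swap_apply_left]
lemma rho_at_C : rhoP k hk (ptC k hk) = ptB k hk := by
  rw [rhoP, Equiv.Perm.mul_apply, gamP, Equiv.swap_apply_right, swP,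
    Equiv.swap_apply_of_ne_of_ne (hBC hk) (hBD hk)]
lemma rho_at_D : rhoP k hk (ptD k hk) = ptC k hk := by
  rw [rhoP, Equiv.Perm.mul_apply, gamP,
    Equiv.swap_apply_of_ne_of_ne (Ne.symm (hBD hk)) (Ne.symm (hCD hk)), swP,
    Equiv.swap_apply_right]
lemma rho_at_lt {m : Fin k} (h : (m : ℕ) < k - 3) : rhoP k hk m = m := by
  have h2 : m ≠ ptB k hk := by simp [ptB, Fin.ext_iff]; omega
  have h3 : m ≠ ptC k hk := by simp [ptC, Fin.ext_iff]; omega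
  have h4 : m ≠ ptD k hk := by simp [ptD, Fin.ext_iff]; omega
  rw [rhoP, Equiv.Perm.mul_apply, gamP, Equiv.swap_apply_of_ne_of_ne h2 h3, swP,
    Equiv.swap_apply_of_ne_of_ne h3 h4]

-- padEnd value lemmas
section padvals
variable {K4 : Fin (k-4) → Fin n} {K3 : Fin (k-3) → Fin n} {a b c d : Fin n}

lemma padEnd4_at_lt {m : Fin k} (h : (m : ℕ) < k - 4) :
    padEnd4 K4 a b c d m = K4 ⟨(m : ℕ), h⟩ := by
  simp only [padEnd4]; rw [dif_pos h]
lemma padEnd4_at_A : padEnd4 K4 a b c d (ptA k hk) = a := by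
  simp only [padEnd4, ptA]; split_ifs <;> first | rfl | (exfalso; omega)
lemma padEnd4_at_B : padEnd4 K4 a b c d (ptB k hk) = b := by
  simp only [padEnd4, ptB]; split_ifs <;> first | rfl | (exfalso; omega)
lemma padEnd4_at_C : padEnd4 K4 a b c d (ptC k hk) = c := by
  simp only [padEnd4, ptC]; split_ifs <;> first | rfl | (exfalso; omega)
lemma padEnd4_at_D : padEnd4 K4 a b c d (ptD k hk) = d := by
  simp only [padEnd4]; rw [ptD_val]; split_ifs <;> first | rfl | (exfalso; omega)

lemma padEnd3_at_lt {m : Fin k} (h : (m : ℕ) < k - 3) :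
    padEnd3 K3 a b c m = K3 ⟨(m : ℕ), h⟩ := by
  simp only [padEnd3]; rw [dif_pos h]
lemma padEnd3_at_B : padEnd3 K3 a b c (ptB k hk) = a := by
  simp only [padEnd3, ptB]; split_ifs <;> first | rfl | (exfalso; omega)
lemma padEnd3_at_C : padEnd3 K3 a b c (ptC k hk) = b := by
  simp only [padEnd3, ptC]; split_ifs <;> first | rfl | (exfalso; omega)
lemma padEnd3_at_D : padEnd3 K3 a b c (ptD k hk) = c := by
  simp only [padEnd3]; rw [ptD_val]; split_ifs <;> first | rfl | (exfalso; omega)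

lemma padEnd4_tau (K4 : Fin (k-4) → Fin n) (a b c d : Fin n) :
    padEnd4 K4 c d a b = fun m => padEnd4 K4 a b c d (tauP k hk m) := by
  funext m
  rcases (show (m : ℕ) < k - 4 ∨ (m : ℕ) = k-4 ∨ (m : ℕ) = k-3 ∨ (m : ℕ) = k-2
      ∨ (m : ℕ) = k-1 by have := m.isLt; omega) with h | h | h | h | h
  · rw [padEnd4_at_lt h, tau_at_lt hk h, padEnd4_at_lt h]
  · obtain rfl : m = ptA k hk := Fin.ext (by simpa [ptA] using h)
    rw [padEnd4_at_A hk, tau_at_A hk, padEnd4_at_C hk]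
  · obtain rfl : m = ptB k hk := Fin.ext (by simpa [ptB] using h)
    rw [padEnd4_at_B hk, tau_at_B hk, padEnd4_at_D hk]
  · obtain rfl : m = ptC k hk := Fin.ext (by simpa [ptC] using h)
    rw [padEnd4_at_C hk, tau_at_C hk, padEnd4_at_A hk]
  · obtain rfl : m = ptD k hk := Fin.ext (by simpa [ptD] using h)
    rw [padEnd4_at_D hk, tau_at_D hk, padEnd4_at_B hk]

lemma padEnd3_rho (K3 : Fin (k-3) → Fin n) (a b c : Fin n) :
    padEnd3 K3 c a b = fun m => padEnd3 K3 a b c (rhoP k hk m) := by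
  funext m
  rcases (show (m : ℕ) < k - 3 ∨ (m : ℕ) = k-3 ∨ (m : ℕ) = k-2
      ∨ (m : ℕ) = k-1 by have := m.isLt; omega) with h | h | h | h
  · rw [padEnd3_at_lt h, rho_at_lt hk h, padEnd3_at_lt h]
  · obtain rfl : m = ptB k hk := Fin.ext (by simpa [ptB] using h)
    rw [padEnd3_at_B hk, rho_at_B hk, padEnd3_at_D hk]
  · obtain rfl : m = ptC k hk := Fin.ext (by simpa [ptC] using h)
    rw [padEnd3_at_C hk, rho_at_C hk, padEnd3_at_B hk]
  · obtain rfl : m = ptD k hk := Fin.ext (by simpa [ptD] using h)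
    rw [padEnd3_at_D hk, rho_at_D hk, padEnd3_at_C hk]

end padvals

section FcExpr
variable (A : (Fin k → Fin n) → ℝ)

lemma T_eq : ∑ p : Fin k → Fin n, (A p)^2 = Fc A 1 := by
  unfold Fc
  apply Finset.sum_congr rfl
  intro p _
  rw [pow_two]
  rfl

lemma N_eq : (∑ K : Fin (k-4) → Fin n, ∑ a : Fin n, ∑ b : Fin n, ∑ c : Fin n, ∑ d : Fin n,
    A (padEnd4 K c d a b) * A (padEnd4 K a b c d)) = Fc A (tauP k hk) := by
  unfold Fc
  rw [← sum_padEnd4 hk (fun p => A p * A (fun m => p (tauP k hk m)))]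
  refine Finset.sum_congr rfl fun K _ => Finset.sum_congr rfl fun a _ =>
    Finset.sum_congr rfl fun b _ => Finset.sum_congr rfl fun c _ =>
    Finset.sum_congr rfl fun d _ => ?_
  rw [padEnd4_tau hk K a b c d, mul_comm]

lemma M_eq : (∑ K : Fin (k-3) → Fin n, ∑ a : Fin n, ∑ b : Fin n, ∑ c : Fin n,
    A (padEnd3 K a b c) * A (padEnd3 K c a b)) = Fc A (rhoP k hk) := by
  unfold Fc
  rw [← sum_padEnd3 (by omega : 3 ≤ k) (fun p => A p * A (fun m => p (rhoP k hk m)))]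
  refine Finset.sum_congr rfl fun K _ => Finset.sum_congr rfl fun a _ =>
    Finset.sum_congr rfl fun b _ => Finset.sum_congr rfl fun c _ => ?_
  rw [padEnd3_rho hk K a b c]

end FcExpr
end T4
section T5
open Equiv
variable {n k : ℕ} (hk : 4 ≤ k) (A : (Fin k → Fin n) → ℝ)

variable (hsym₁ : ∀ (p : Fin k → Fin n) (σ : Equiv.Perm (Fin k)),
      (∀ m : Fin k, k - 2 ≤ (m : ℕ) → σ m = m) → A (fun m => p (σ m)) = A p)
variable (hsym₂ : ∀ p : Fin k → Fin n,
      A (fun m => p (Equiv.swap (⟨k - 2, by omega⟩ : Fin k) (⟨k - 1, by omega⟩ : Fin k) m))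
        = A p)

include hsym₁ in
lemma Ainv_ww : Ainv A (wwP k hk) := by
  intro p
  apply hsym₁
  intro m hm
  apply Equiv.swap_apply_of_ne_of_ne
  · simp [ptA, Fin.ext_iff]; omega
  · simp [ptB, Fin.ext_iff]; omega

include hsym₂ in
lemma Ainv_sw : Ainv A (swP k hk) := by
  intro p
  exact hsym₂ p

include hsym₁ hsym₂ in
lemma Ainv_wws : Ainv A (wwP k hk * swP k hk) :=
  Ainv.mul (Ainv_ww hk A hsym₁) (Ainv_sw hk A hsym₂)

-- Fc values of the four cross permutations
include hsym₂ in
lemma Fc_gam : Fc A (gamP k hk) = Fc A (rhoP k hk) := by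
  have h : gamP k hk = swP k hk * rhoP k hk := by
    rw [rhoP, ← mul_assoc, swP, Equiv.swap_mul_self, one_mul]
  rw [h, Fc_left (Ainv_sw hk A hsym₂)]

include hsym₁ in
lemma Fc_gamtau : Fc A (gamP k hk * tauP k hk) = Fc A (rhoP k hk) := by
  have h : gamP k hk * tauP k hk = wwP k hk * rhoP k hk := by
    rw [gamP, tauP, wwP, rhoP, swP, gamP]
    exact perm_id1 (hAB hk) (hAC hk) (hAD hk) (hBC hk) (hBD hk) (hCD hk)
  rw [h, Fc_left (Ainv_ww hk A hsym₁)]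

include hsym₁ hsym₂ in
lemma Fc_taugam : Fc A (tauP k hk * gamP k hk) = Fc A (rhoP k hk) := by
  have h : tauP k hk * gamP k hk = gamP k hk * (wwP k hk * swP k hk) := by
    rw [gamP, tauP, wwP, swP]
    exact perm_id2 (hAB hk) (hAC hk) (hAD hk) (hBC hk) (hBD hk) (hCD hk)
  rw [h, Fc_right (Ainv_wws hk A hsym₁ hsym₂), Fc_gam hk A hsym₂]

include hsym₁ hsym₂ in
lemma Fc_taugamtau : Fc A (tauP k hk * (gamP k hk * tauP k hk)) = Fc A (rhoP k hk) := by
  have h : tauP k hk * (gamP k hk * tauP k hk)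
      = wwP k hk * (rhoP k hk * (wwP k hk * swP k hk)) := by
    rw [gamP, tauP, wwP, rhoP, swP, gamP]
    rw [← mul_assoc (swap (ptC k hk) (ptD k hk) * swap (ptB k hk) (ptC k hk))]
    exact perm_id3 (hAB hk) (hAC hk) (hAD hk) (hBC hk) (hBD hk) (hCD hk)
  rw [h, Fc_left (Ainv_ww hk A hsym₁), Fc_right (Ainv_wws hk A hsym₁ hsym₂)]

include hsym₁ hsym₂ in
lemma sos : Fc A 1 + Fc A (tauP k hk) - 2 * Fc A (rhoP k hk) ≥ 0 := by
  have key : 0 ≤ ∑ p : Fin k → Fin n,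
      (A p + A (fun m => p (tauP k hk m)) - A (fun m => p (gamP k hk m))
        - A (fun m => p ((gamP k hk * tauP k hk) m)))^2 :=
    Finset.sum_nonneg fun p _ => sq_nonneg _
  have expand : ∑ p : Fin k → Fin n,
      (A p + A (fun m => p (tauP k hk m)) - A (fun m => p (gamP k hk m))
        - A (fun m => p ((gamP k hk * tauP k hk) m)))^2
      = (∑ p : Fin k → Fin n, (A p)^2)
        + (∑ p : Fin k → Fin n, (A (fun m => p (tauP k hk m)))^2)
        + (∑ p : Fin k → Fin n, (A (fun m => p (gamP k hk m)))^2)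
        + (∑ p : Fin k → Fin n, (A (fun m => p ((gamP k hk * tauP k hk) m)))^2)
        + 2 * (∑ p : Fin k → Fin n, A p * A (fun m => p (tauP k hk m)))
        + 2 * (∑ p : Fin k → Fin n,
            A (fun m => p (gamP k hk m)) * A (fun m => p ((gamP k hk * tauP k hk) m)))
        - 2 * (∑ p : Fin k → Fin n, A p * A (fun m => p (gamP k hk m)))
        - 2 * (∑ p : Fin k → Fin n, A p * A (fun m => p ((gamP k hk * tauP k hk) m)))
        - 2 * (∑ p : Fin k → Fin n,
            A (fun m => p (tauP k hk m)) * A (fun m => p (gamP k hk m)))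
        - 2 * (∑ p : Fin k → Fin n,
            A (fun m => p (tauP k hk m)) * A (fun m => p ((gamP k hk * tauP k hk) m))) := by
    simp only [Finset.mul_sum, ← Finset.sum_add_distrib, ← Finset.sum_sub_distrib]
    apply Finset.sum_congr rfl
    intro p _
    ring
  have h1 : ∑ p : Fin k → Fin n, (A (fun m => p (tauP k hk m)))^2
      = ∑ p : Fin k → Fin n, (A p)^2 := sum_reindex (fun q => (A q)^2) _
  have h2 : ∑ p : Fin k → Fin n, (A (fun m => p (gamP k hk m)))^2
      = ∑ p : Fin k → Fin n, (A p)^2 := sum_reindex (fun q => (A q)^2) _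
  have h3 : ∑ p : Fin k → Fin n, (A (fun m => p ((gamP k hk * tauP k hk) m)))^2
      = ∑ p : Fin k → Fin n, (A p)^2 := sum_reindex (fun q => (A q)^2) _
  have e4 : ∑ p : Fin k → Fin n, A p * A (fun m => p (tauP k hk m)) = Fc A (tauP k hk) := rfl
  have e6 : ∑ p : Fin k → Fin n, A p * A (fun m => p (gamP k hk m)) = Fc A (gamP k hk) := rfl
  have e7 : ∑ p : Fin k → Fin n, A p * A (fun m => p ((gamP k hk * tauP k hk) m))
      = Fc A (gamP k hk * tauP k hk) := rfl
  have e5 : ∑ p : Fin k → Fin n,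
      A (fun m => p (gamP k hk m)) * A (fun m => p ((gamP k hk * tauP k hk) m))
      = Fc A (tauP k hk) := by
    rw [Fc, ← sum_reindex (fun q => A q * A (fun m => q (tauP k hk m))) (gamP k hk)]
    apply Finset.sum_congr rfl
    intro p _
    rfl
  have e8 : ∑ p : Fin k → Fin n,
      A (fun m => p (tauP k hk m)) * A (fun m => p (gamP k hk m))
      = Fc A (tauP k hk * gamP k hk) := by
    rw [Fc, ← sum_reindex (fun q => A q * A (fun m => q ((tauP k hk * gamP k hk) m)))
      (tauP k hk)]
    apply Finset.sum_congr rfl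
    intro p _
    congr 1
    apply congrArg A
    funext m
    simp only [Equiv.Perm.mul_apply, tau_invol hk]
  have e9 : ∑ p : Fin k → Fin n,
      A (fun m => p (tauP k hk m)) * A (fun m => p ((gamP k hk * tauP k hk) m))
      = Fc A (tauP k hk * (gamP k hk * tauP k hk)) := by
    rw [Fc, ← sum_reindex
      (fun q => A q * A (fun m => q ((tauP k hk * (gamP k hk * tauP k hk)) m))) (tauP k hk)]
    apply Finset.sum_congr rfl
    intro p _
    congr 1
    apply congrArg A
    funext m
    simp only [Equiv.Perm.mul_apply, tau_invol hk]
  rw [expand, h1, h2, h3, e4, e5, e6, e7, e8, e9, Fc_gam hk A hsym₂,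
    Fc_gamtau hk A hsym₁, Fc_taugam hk A hsym₁ hsym₂, Fc_taugamtau hk A hsym₁ hsym₂,
    T_eq A] at key
  linarith

end T5
section T6
open Equiv
variable {n k : ℕ}

def hatPermFun (k : ℕ) (i j : Fin k) : Fin k → Fin k := fun m =>
  if h : (m : ℕ) < k - 2 then dropPair i j ⟨(m : ℕ), h⟩
  else if (m : ℕ) = k - 2 then i else j

def hatInvFun (k : ℕ) (hk : 4 ≤ k) (i j : Fin k) : Fin k → Fin k := fun t =>
  if t = i then ⟨k-2, by omega⟩
  else if t = j then ⟨k-1, by omega⟩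
  else if (t : ℕ) < (i : ℕ) then t
  else if (t : ℕ) < (j : ℕ) then ⟨(t : ℕ) - 1, by have := t.isLt; omega⟩
  else ⟨(t : ℕ) - 2, by have := t.isLt; omega⟩

def hatPermE (hk : 4 ≤ k) (i j : Fin k) (hij : i < j) : Equiv.Perm (Fin k) where
  toFun := hatPermFun k i j
  invFun := hatInvFun k hk i j
  left_inv := by
    intro m
    have hmlt := m.isLt
    have hjlt := j.isLt
    have hij' : (i : ℕ) < (j : ℕ) := hij
    have hilt := i.isLt
    simp only [hatPermFun, hatInvFun, dropPair, Fin.ext_iff, Fin.val_mk]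
    split_ifs <;> first
    | omega
    | (simp only [Fin.val_mk] at *; omega)
    | (simp only [Fin.val_mk] at *; done)
      | (exfalso; simp_all; done)
      | (exfalso; simp_all; omega)
  right_inv := by
    intro t
    have htlt := t.isLt
    have hjlt := j.isLt
    have hij' : (i : ℕ) < (j : ℕ) := hij
    have hilt := i.isLt
    simp only [hatPermFun, hatInvFun, dropPair, Fin.ext_iff, Fin.val_mk]
    split_ifs <;> first
    | omega
    | (simp only [Fin.val_mk] at *; omega)
    | (simp only [Fin.val_mk] at *; done)
      | (exfalso; simp_all; done)
      | (exfalso; simp_all; omega)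

lemma hatTuple_eq (hk : 4 ≤ k) (p : Fin k → Fin n) (i j : Fin k) (hij : i < j) :
    hatTuple p i j = fun m => p (hatPermE hk i j hij m) := by
  funext m
  show _ = p (hatPermFun k i j m)
  simp only [hatTuple, hatPermFun]
  split_ifs <;> rfl

lemma hat_to_Fc (hk : 4 ≤ k) (A : (Fin k → Fin n) → ℝ) (i j : Fin k) (hij : i < j) :
    ∑ p : Fin k → Fin n, A p * A (hatTuple p i j) = Fc A (hatPermE hk i j hij) := by
  apply Finset.sum_congr rfl
  intro p _
  rw [hatTuple_eq hk p i j hij]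

-- inverse value lemmas
lemma tauinv_at_C (hk : 4 ≤ k) : (tauP k hk)⁻¹ (ptC k hk) = ptA k hk := by
  rw [Equiv.Perm.inv_def, Equiv.symm_apply_eq]; exact (tau_at_A hk).symm
lemma tauinv_at_D (hk : 4 ≤ k) : (tauP k hk)⁻¹ (ptD k hk) = ptB k hk := by
  rw [Equiv.Perm.inv_def, Equiv.symm_apply_eq]; exact (tau_at_B hk).symm
lemma rhoinv_at_C (hk : 4 ≤ k) : (rhoP k hk)⁻¹ (ptC k hk) = ptD k hk := by
  rw [Equiv.Perm.inv_def, Equiv.symm_apply_eq]; exact (rho_at_D hk).symm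
lemma rhoinv_at_D (hk : 4 ≤ k) : (rhoP k hk)⁻¹ (ptD k hk) = ptB k hk := by
  rw [Equiv.Perm.inv_def, Equiv.symm_apply_eq]; exact (rho_at_B hk).symm

lemma chi3_inv (hk : 4 ≤ k) : ((rhoP k hk)⁻¹ * swP k hk)⁻¹ = gamP k hk := by
  rw [mul_inv_rev, inv_inv, swP, Equiv.swap_inv, rhoP, swP, ← mul_assoc,
    Equiv.swap_mul_self, one_mul]

section cases
variable (hk : 4 ≤ k) (A : (Fin k → Fin n) → ℝ)
variable (hsym₁ : ∀ (p : Fin k → Fin n) (σ : Equiv.Perm (Fin k)),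
      (∀ m : Fin k, k - 2 ≤ (m : ℕ) → σ m = m) → A (fun m => p (σ m)) = A p)
variable (hsym₂ : ∀ p : Fin k → Fin n,
      A (fun m => p (Equiv.swap (⟨k - 2, by omega⟩ : Fin k) (⟨k - 1, by omega⟩ : Fin k) m))
        = A p)

include hsym₁ in
lemma case_N {i j : Fin k} (hij : i < j) (hj : (j : ℕ) < k - 2) :
    ∑ p : Fin k → Fin n, A p * A (hatTuple p i j) = Fc A (tauP k hk) := by
  rw [hat_to_Fc hk A i j hij]
  apply Fc_key hsym₁
  intro m hm
  have hmlt := m.isLt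
  have hij' : (i : ℕ) < (j : ℕ) := hij
  rw [Equiv.Perm.mul_apply]
  rcases (show (m : ℕ) = k-2 ∨ (m : ℕ) = k-1 by omega) with h | h
  · have hm' : m = ptC k hk := Fin.ext (by simpa [ptC] using h)
    rw [hm', tauinv_at_C hk]
    show hatPermFun k i j (ptA k hk) = ptC k hk
    simp only [hatPermFun, dropPair, Fin.ext_iff, Fin.val_mk]; rw [ptA_val, ptC_val]
    split_ifs <;> first
      | omega
      | (simp only [Fin.val_mk] at *; omega)
      | (simp only [Fin.val_mk] at *; done)
      | (exfalso; simp_all; done)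
      | (exfalso; simp_all; omega)
  · have hm' : m = ptD k hk := Fin.ext (by simpa [ptD] using h)
    rw [hm', tauinv_at_D hk]
    show hatPermFun k i j (ptB k hk) = ptD k hk
    simp only [hatPermFun, dropPair, Fin.ext_iff, Fin.val_mk]; rw [ptB_val, ptD_val]
    split_ifs <;> first
      | omega
      | (simp only [Fin.val_mk] at *; omega)
      | (simp only [Fin.val_mk] at *; done)
      | (exfalso; simp_all; done)
      | (exfalso; simp_all; omega)

include hsym₁ in
lemma case_M2 {i j : Fin k} (hij : i < j) (hj : (j : ℕ) = k - 2) :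
    ∑ p : Fin k → Fin n, A p * A (hatTuple p i j) = Fc A (rhoP k hk) := by
  rw [hat_to_Fc hk A i j hij]
  apply Fc_key hsym₁
  intro m hm
  have hmlt := m.isLt
  have hij' : (i : ℕ) < (j : ℕ) := hij
  rw [Equiv.Perm.mul_apply]
  rcases (show (m : ℕ) = k-2 ∨ (m : ℕ) = k-1 by omega) with h | h
  · have hm' : m = ptC k hk := Fin.ext (by simpa [ptC] using h)
    rw [hm', rhoinv_at_C hk]
    show hatPermFun k i j (ptD k hk) = ptC k hk
    simp only [hatPermFun, dropPair, Fin.ext_iff, Fin.val_mk]; rw [ptD_val, ptC_val]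
    split_ifs <;> first
      | omega
      | (simp only [Fin.val_mk] at *; omega)
      | (simp only [Fin.val_mk] at *; done)
      | (exfalso; simp_all; done)
      | (exfalso; simp_all; omega)
  · have hm' : m = ptD k hk := Fin.ext (by simpa [ptD] using h)
    rw [hm', rhoinv_at_D hk]
    show hatPermFun k i j (ptB k hk) = ptD k hk
    simp only [hatPermFun, dropPair, Fin.ext_iff, Fin.val_mk]; rw [ptB_val, ptD_val]
    split_ifs <;> first
      | omega
      | (simp only [Fin.val_mk] at *; omega)
      | (simp only [Fin.val_mk] at *; done)
      | (exfalso; simp_all; done)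
      | (exfalso; simp_all; omega)

include hsym₁ hsym₂ in
lemma case_M3 {i j : Fin k} (hij : i < j) (hi : (i : ℕ) < k - 2) (hj : (j : ℕ) = k - 1) :
    ∑ p : Fin k → Fin n, A p * A (hatTuple p i j) = Fc A (rhoP k hk) := by
  rw [hat_to_Fc hk A i j hij]
  have step : Fc A (hatPermE hk i j hij) = Fc A ((rhoP k hk)⁻¹ * swP k hk) := by
    apply Fc_key hsym₁
    intro m hm
    have hmlt := m.isLt
    have hij' : (i : ℕ) < (j : ℕ) := hij
    rw [Equiv.Perm.mul_apply, chi3_inv hk]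
    rcases (show (m : ℕ) = k-2 ∨ (m : ℕ) = k-1 by omega) with h | h
    · have hm' : m = ptC k hk := Fin.ext (by simpa [ptC] using h)
      have hg : gamP k hk (ptC k hk) = ptB k hk := by
        rw [gamP, Equiv.swap_apply_right]
      rw [hm', hg]
      show hatPermFun k i j (ptB k hk) = ptC k hk
      simp only [hatPermFun, dropPair, Fin.ext_iff, Fin.val_mk]; rw [ptB_val, ptC_val]
      split_ifs <;> first
      | omega
      | (simp only [Fin.val_mk] at *; omega)
      | (simp only [Fin.val_mk] at *; done)
      | (exfalso; simp_all; done)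
      | (exfalso; simp_all; omega)
    · have hm' : m = ptD k hk := Fin.ext (by simpa [ptD] using h)
      have hg : gamP k hk (ptD k hk) = ptD k hk := by
        rw [gamP, Equiv.swap_apply_of_ne_of_ne (Ne.symm (hBD hk)) (Ne.symm (hCD hk))]
      rw [hm', hg]
      show hatPermFun k i j (ptD k hk) = ptD k hk
      simp only [hatPermFun, dropPair, Fin.ext_iff, Fin.val_mk]; rw [ptD_val]
      split_ifs <;> first
      | omega
      | (simp only [Fin.val_mk] at *; omega)
      | (simp only [Fin.val_mk] at *; done)
      | (exfalso; simp_all; done)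
      | (exfalso; simp_all; omega)
  rw [step, Fc_right (Ainv_sw hk A hsym₂), Fc_inv]

lemma case_T {i j : Fin k} (hi : (i : ℕ) = k - 2) (hj : (j : ℕ) = k - 1) :
    ∑ p : Fin k → Fin n, A p * A (hatTuple p i j) = ∑ p : Fin k → Fin n, (A p)^2 := by
  have : ∀ p : Fin k → Fin n, hatTuple p i j = p := by
    intro p
    funext m
    have hmlt := m.isLt
    simp only [hatTuple, dropPair, Fin.val_mk]
    have hilt := i.isLt
    have hjlt := j.isLt
    split_ifs <;> first
      | rfl
      | (congr 1; apply Fin.ext; first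
          | omega
          | (simp only [Fin.val_mk] at *; omega))
  apply Finset.sum_congr rfl
  intro p _
  rw [this p, pow_two]

end cases
end T6
section T7
variable {k : ℕ}

lemma inner_count (c : ℝ) (y N : ℕ) (hy : y ≤ N) :
    ∑ x ∈ Finset.range N, (if x < y then c else 0) = (y : ℝ) * c := by
  rw [Finset.sum_ite, Finset.sum_const_zero, add_zero, Finset.sum_const]
  have : Finset.filter (fun x => x < y) (Finset.range N) = Finset.range y := by
    ext x
    simp only [Finset.mem_filter, Finset.mem_range]
    omega
  rw [this, Finset.card_range, nsmul_eq_mul]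

lemma outer_count (K : ℕ) (NN MM TT : ℝ) :
    ∑ y ∈ Finset.range (K+2),
      (if y < K then (y:ℝ)*NN else if y = K then (K:ℝ)*MM else (K:ℝ)*MM + TT)
    = ((∑ x ∈ Finset.range K, x : ℕ) : ℝ)*NN + 2*(K:ℝ)*MM + TT := by
  rw [Finset.sum_range_succ, Finset.sum_range_succ]
  have h1 : ¬ (K + 1 < K) := by omega
  have h2 : ¬ (K + 1 = K) := by omega
  have h3 : ¬ (K < K) := by omega
  rw [if_neg h1, if_neg h2, if_neg h3, if_pos rfl]
  have h4 : ∑ y ∈ Finset.range K,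
      (if y < K then (y:ℝ)*NN else if y = K then (K:ℝ)*MM else (K:ℝ)*MM + TT)
      = ∑ y ∈ Finset.range K, (y:ℝ)*NN := by
    apply Finset.sum_congr rfl
    intro y hy
    rw [if_pos (Finset.mem_range.mp hy)]
  rw [h4, ← Finset.sum_mul]
  rw [← Nat.cast_sum]
  ring

lemma count_lemma (hk : 4 ≤ k) (TT NN MM : ℝ) (g : Fin k → Fin k → ℝ)
    (hgN : ∀ i j : Fin k, i < j → (j:ℕ) < k-2 → g i j = NN)
    (hgM2 : ∀ i j : Fin k, i < j → (j:ℕ) = k-2 → g i j = MM)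
    (hgM3 : ∀ i j : Fin k, i < j → (i:ℕ) < k-2 → (j:ℕ) = k-1 → g i j = MM)
    (hgT : ∀ i j : Fin k, (i:ℕ) = k-2 → (j:ℕ) = k-1 → g i j = TT) :
    ∑ i : Fin k, ∑ j : Fin k, (if i < j then g i j else 0)
      = ((∑ x ∈ Finset.range (k-2), x : ℕ) : ℝ)*NN + 2*((k-2 : ℕ):ℝ)*MM + TT := by
  rw [Finset.sum_comm]
  have inner : ∀ j : Fin k, ∑ i : Fin k, (if i < j then g i j else 0)
      = (if (j:ℕ) < k-2 then ((j:ℕ):ℝ)*NN else if (j:ℕ) = k-2 then ((k-2:ℕ):ℝ)*MM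
          else ((k-2:ℕ):ℝ)*MM + TT) := by
    intro j
    have hjlt := j.isLt
    rcases (show (j:ℕ) < k-2 ∨ (j:ℕ) = k-2 ∨ (j:ℕ) = k-1 by omega) with hj | hj | hj
    · rw [if_pos hj]
      have : ∀ i : Fin k, (if i < j then g i j else 0) = (if (i:ℕ) < (j:ℕ) then NN else 0) := by
        intro i
        by_cases h : i < j
        · rw [if_pos h, if_pos (by exact h), hgN i j h hj]
        · rw [if_neg h, if_neg (by exact fun hh => h hh)]
      simp only [this]
      rw [Fin.sum_univ_eq_sum_range (fun x => if x < (j:ℕ) then NN else 0) k]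
      exact inner_count NN (j:ℕ) k (by omega)
    · rw [if_neg (by omega), if_pos hj]
      have : ∀ i : Fin k, (if i < j then g i j else 0) = (if (i:ℕ) < (j:ℕ) then MM else 0) := by
        intro i
        by_cases h : i < j
        · rw [if_pos h, if_pos (by exact h), hgM2 i j h hj]
        · rw [if_neg h, if_neg (by exact fun hh => h hh)]
      simp only [this]
      rw [Fin.sum_univ_eq_sum_range (fun x => if x < (j:ℕ) then MM else 0) k]
      rw [inner_count MM (j:ℕ) k (by omega), hj]
    · rw [if_neg (by omega), if_neg (by omega)]
      have : ∀ i : Fin k, (if i < j then g i j else 0)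
          = (if (i:ℕ) < k-2 then MM else 0) + (if (i:ℕ) = k-2 then TT else 0) := by
        intro i
        have hilt := i.isLt
        by_cases h1 : (i:ℕ) < k-2
        · have hij : i < j := by
            show (i:ℕ) < (j:ℕ); omega
          rw [if_pos hij, if_pos h1, if_neg (by omega), add_zero, hgM3 i j hij h1 hj]
        · by_cases h2 : (i:ℕ) = k-2
          · have hij : i < j := by show (i:ℕ) < (j:ℕ); omega
            rw [if_pos hij, if_neg h1, if_pos h2, zero_add, hgT i j h2 hj]
          · have hij : ¬ (i < j) := by
              show ¬ ((i:ℕ) < (j:ℕ)); omega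
            rw [if_neg hij, if_neg h1, if_neg h2, add_zero]
      simp only [this]
      rw [Finset.sum_add_distrib]
      rw [Fin.sum_univ_eq_sum_range (fun x => if x < k-2 then MM else 0) k]
      rw [Fin.sum_univ_eq_sum_range (fun x => if x = k-2 then TT else 0) k]
      rw [inner_count MM (k-2) k (by omega)]
      rw [Finset.sum_ite_eq' (Finset.range k) (k-2) (fun _ => TT)]
      rw [if_pos (Finset.mem_range.mpr (by omega))]
  simp only [inner]
  rw [Fin.sum_univ_eq_sum_range
    (fun y => if y < k-2 then (y:ℝ)*NN else if y = k-2 then ((k-2:ℕ):ℝ)*MM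
        else ((k-2:ℕ):ℝ)*MM + TT) k]
  have hout := outer_count (k-2) NN MM TT
  rw [show (k-2)+2 = k from by omega] at hout
  exact hout

end T7

/-- Lemma "lpos": for a tensor `A`, symmetric in its first `k-2` slots and in its
last two slots, whose full symmetrization vanishes, one has `2T + (k-2)N ≥ 0` and
`T + N - 2M ≥ 0`. -/
theorem lpos_identity (n k : ℕ) (hn : 1 ≤ n) (hk : 4 ≤ k)
    (A : (Fin k → Fin n) → ℝ)
    (hsym₁ : ∀ (p : Fin k → Fin n) (σ : Equiv.Perm (Fin k)),
      (∀ m : Fin k, k - 2 ≤ (m : ℕ) → σ m = m) → A (fun m => p (σ m)) = A p)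
    (hsym₂ : ∀ p : Fin k → Fin n,
      A (fun m => p (Equiv.swap (⟨k - 2, by omega⟩ : Fin k) (⟨k - 1, by omega⟩ : Fin k) m))
        = A p)
    (hsym₀ : ∀ p : Fin k → Fin n,
      ∑ i : Fin k, ∑ j : Fin k, (if i < j then A (hatTuple p i j) else 0) = 0) :
    2 * (∑ p : Fin k → Fin n, (A p) ^ 2)
        + ((k : ℝ) - 2) *
          (∑ K : Fin (k - 4) → Fin n, ∑ a : Fin n, ∑ b : Fin n, ∑ c : Fin n, ∑ d : Fin n,
            A (padEnd4 K c d a b) * A (padEnd4 K a b c d)) ≥ 0 ∧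
      (∑ p : Fin k → Fin n, (A p) ^ 2)
        + (∑ K : Fin (k - 4) → Fin n, ∑ a : Fin n, ∑ b : Fin n, ∑ c : Fin n, ∑ d : Fin n,
            A (padEnd4 K c d a b) * A (padEnd4 K a b c d))
        - 2 * (∑ K : Fin (k - 3) → Fin n, ∑ a : Fin n, ∑ b : Fin n, ∑ c : Fin n,
            A (padEnd3 K a b c) * A (padEnd3 K c a b)) ≥ 0 := by
  have hkR : (4 : ℝ) ≤ (k : ℝ) := by exact_mod_cast hk
  -- the sums-of-squares inequality
  have hD : (∑ p : Fin k → Fin n, (A p)^2) + Fc A (tauP k hk) - 2 * Fc A (rhoP k hk) ≥ 0 := by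
    have := sos hk A hsym₁ hsym₂
    rwa [← T_eq A] at this
  -- the contraction of the symmetrization identity
  have h0 : ∑ i : Fin k, ∑ j : Fin k,
      (if i < j then (∑ p : Fin k → Fin n, A p * A (hatTuple p i j)) else 0) = 0 := by
    have e1 : ∀ (i j : Fin k),
        (if i < j then (∑ p : Fin k → Fin n, A p * A (hatTuple p i j)) else 0)
        = ∑ p : Fin k → Fin n, (if i < j then A p * A (hatTuple p i j) else 0) := by
      intro i j
      split_ifs with h
      · rfl
      · rw [Finset.sum_const_zero]
    simp only [e1]
    have e2 : ∀ i : Fin k,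
        (∑ j : Fin k, ∑ p : Fin k → Fin n, (if i < j then A p * A (hatTuple p i j) else 0))
        = ∑ p : Fin k → Fin n, ∑ j : Fin k, (if i < j then A p * A (hatTuple p i j) else 0) :=
      fun i => Finset.sum_comm ..

    simp only [e2]
    rw [Finset.sum_comm]
    have e3 : ∀ p : Fin k → Fin n,
        (∑ i : Fin k, ∑ j : Fin k, (if i < j then A p * A (hatTuple p i j) else 0)) = 0 := by
      intro p
      have e4 : ∀ i j : Fin k, (if i < j then A p * A (hatTuple p i j) else 0)
          = A p * (if i < j then A (hatTuple p i j) else 0) := by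
        intro i j
        split_ifs
        · rfl
        · rw [mul_zero]
      simp only [e4, ← Finset.mul_sum]
      rw [hsym₀ p, mul_zero]
    rw [Finset.sum_congr rfl (fun p _ => e3 p), Finset.sum_const_zero]
  have hcount := count_lemma hk (∑ p : Fin k → Fin n, (A p)^2) (Fc A (tauP k hk))
    (Fc A (rhoP k hk)) (fun i j => ∑ p : Fin k → Fin n, A p * A (hatTuple p i j))
    (fun i j hij hj => case_N hk A hsym₁ hij hj)
    (fun i j hij hj => case_M2 hk A hsym₁ hij hj)
    (fun i j hij hi hj => case_M3 hk A hsym₁ hsym₂ hij hi hj)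
    (fun i j hi hj => case_T A hi hj)
  rw [h0] at hcount
  -- casts
  have c2 : ((k-2 : ℕ):ℝ) = (k:ℝ) - 2 := by
    rw [Nat.cast_sub (by omega)]; norm_num
  have hgaussN : (∑ x ∈ Finset.range (k-2), x) * 2 = (k-2)*(k-3) := by
    have := Finset.sum_range_id_mul_two (k-2)
    rwa [show k-2-1 = k-3 from by omega] at this
  have hg : ((∑ x ∈ Finset.range (k-2), x : ℕ):ℝ) * 2 = ((k:ℝ)-2)*((k:ℝ)-3) := by
    have : (((∑ x ∈ Finset.range (k-2), x) * 2 : ℕ) : ℝ) = (((k-2)*(k-3) : ℕ) : ℝ) := by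
      rw [hgaussN]
    push_cast at this
    rw [Nat.cast_sub (by omega), Nat.cast_sub (by omega)] at this
    push_cast at this
    convert this using 2 <;> push_cast <;> ring
  rw [c2] at hcount
  set TT := ∑ p : Fin k → Fin n, (A p)^2 with hTT
  set NN := Fc A (tauP k hk) with hNN
  set MM := Fc A (rhoP k hk) with hMM
  set S := ((∑ x ∈ Finset.range (k-2), x : ℕ):ℝ) with hS
  -- the linear identity
  have hI : 2*TT + ((k:ℝ)-2)*((k:ℝ)-3)*NN + 4*((k:ℝ)-2)*MM = 0 := by
    linear_combination (-2 : ℝ)*hcount - NN*hg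
  have h1 : ((k:ℝ)-1) * (2*TT + ((k:ℝ)-2)*NN) = 2*((k:ℝ)-2) * (TT + NN - 2*MM) := by
    linear_combination hI
  constructor
  · rw [N_eq hk A]
    have hne : (k:ℝ) - 1 ≠ 0 := by nlinarith
    have hform : 2*TT + ((k:ℝ)-2)*NN = (2*((k:ℝ)-2) * (TT + NN - 2*MM))/((k:ℝ)-1) := by
      rw [eq_div_iff hne]
      linear_combination h1
    show 2*TT + ((k:ℝ)-2)*NN ≥ 0
    rw [hform]
    apply div_nonneg
    · apply mul_nonneg
      · nlinarith
      · linarith [hD]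
    · nlinarith
  · rw [N_eq hk A, M_eq hk A]
    exact hD
end

section
/- Let k ≥ 4 be an integer and let T, M, N be real numbers with T ≥ 0. Assume that for every real number t: T·t² + 2·((k−2)(k−3)/2)·N·t + ((k−2)(k−3)/2)·T + ((k−2)(k−3)/2)·((k−4)(k−5)/2)·N + 2·((k−2)(k−3)/2)·(k−4)·M ≥ 0, where by convention (k−4)(k−5)/2 is replaced by 0 when k = 4 or k = 5 interpreted as the binomial coefficient C(k−4,2). Assume moreover that 2·T + (k−2)·((k−3)·N + 4·M) = 0. Then 2·T + (k−2)·N ≥ 0 and T + N − 2·M ≥ 0. -/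
lemma choose_two_cast (m : ℕ) : ((Nat.choose (m+1) 2 : ℕ) : ℝ) = ((m:ℝ)+1)*(m:ℝ)/2 := by
  induction m with
  | zero => simp
  | succ n ih =>
    rw [show n + 1 + 1 = n + 2 from rfl, Nat.choose_succ_succ, Nat.choose_one_right]
    push_cast
    push_cast at ih
    linarith [ih]

/-- The discriminant argument in the proof of Lemma "lpos": if the quadratic
polynomial `|Γ(t)|²` is nonnegative for all `t` and the symmetrized Ricci identity
`2T + (k-2)((k-3)N + 4M) = 0` holds, then `2T + (k-2)N ≥ 0` and `T + N - 2M ≥ 0`. -/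
theorem lpos_discriminant (k : ℕ) (hk : 4 ≤ k) (T M N : ℝ) (hT : 0 ≤ T)
    (hquad : ∀ t : ℝ,
      T * t ^ 2 + 2 * ((Nat.choose (k - 2) 2 : ℝ)) * N * t
        + (Nat.choose (k - 2) 2 : ℝ) * T
        + (Nat.choose (k - 2) 2 : ℝ) * (Nat.choose (k - 4) 2 : ℝ) * N
        + 2 * (Nat.choose (k - 2) 2 : ℝ) * ((k : ℝ) - 4) * M ≥ 0)
    (hconstraint : 2 * T + ((k : ℝ) - 2) * (((k : ℝ) - 3) * N + 4 * M) = 0) :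
    2 * T + ((k : ℝ) - 2) * N ≥ 0 ∧ T + N - 2 * M ≥ 0 := by
  obtain ⟨m, rfl⟩ : ∃ m, k = m + 4 := ⟨k - 4, by omega⟩
  rcases m with _ | n
  · -- k = 4
    have hq := hquad 1
    norm_num at hq hconstraint ⊢
    constructor <;> linarith
  · -- k = n + 5
    have hq := hquad ((n : ℝ) + 2)
    have h1 : (n + 1 + 4) - 2 = (n + 2) + 1 := by omega
    have h2 : (n + 1 + 4) - 4 = n + 1 := by omega
    rw [h1, h2, choose_two_cast, choose_two_cast] at hq
    push_cast at hq hconstraint ⊢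
    -- multiply the constraint by (n+2)(n+1)
    have hc2 : ((n:ℝ)+2) * ((n:ℝ)+1) *
        (2 * T + ((n:ℝ) + 1 + 4 - 2) * (((n:ℝ) + 1 + 4 - 3) * N + 4 * M)) = 0 :=
      mul_eq_zero_of_right _ hconstraint
    have hn : (0:ℝ) ≤ (n:ℝ) := Nat.cast_nonneg n
    have key : 0 ≤ (((n:ℝ)+3) * ((n:ℝ)+2) / 2) * (2 * T + ((n:ℝ)+3) * N) := by
      nlinarith [hq, hc2]
    have hcpos : (0:ℝ) < ((n:ℝ)+3) * ((n:ℝ)+2) / 2 := by positivity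
    have g1 : 0 ≤ 2 * T + ((n:ℝ)+3) * N := by
      by_contra h
      push_neg at h
      nlinarith [key, mul_pos hcpos (neg_pos.mpr h)]
    have key2 : 0 ≤ ((n:ℝ)+3) * (T + N - 2 * M) := by
      nlinarith [g1, hconstraint, mul_nonneg hn g1]
    have g2 : 0 ≤ T + N - 2 * M := by
      by_contra h
      push_neg at h
      nlinarith [key2, mul_pos (show (0:ℝ) < (n:ℝ)+3 by positivity) (neg_pos.mpr h)]
    constructor <;> [linarith [g1]; linarith [g2]]
end

section
/- Let ω ≥ 1 be a natural number and let T, M, N : ℕ → ℝ be sequences such that for every natural number ℓ with 0 ≤ ℓ ≤ ⌊(ω−1)/2⌋: T(ℓ) ≥ 0, 2·T(ℓ) + (ω−2ℓ)·((ω−2ℓ−1)·N(ℓ) + 4·M(ℓ)) = 0, and 2·T(ℓ) + (ω−2ℓ)·N(ℓ) ≥ 0. Then Σ_{ℓ=0}^{⌊(ω−1)/2⌋} d(ω,ℓ)·( ((ω+1)(ω−2ℓ) − (ω+4))·T(ℓ) − 2(ω−2ℓ)(ω+2)·M(ℓ) ) ≥ Σ_{ℓ=0}^{⌊(ω−1)/2⌋}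 2ℓ·d(ω,ℓ)·T(ℓ). -/
/-- The rational coefficient `d(γ,ℓ) = 2^(γ-2ℓ)·(γ!)³ / ((γ-2ℓ)!·(ℓ!)²)` for `2ℓ ≤ γ`,
and `0` when `2ℓ > γ`. -/
def dCoeff (γ ℓ : ℕ) : ℚ :=
  if 2 * ℓ ≤ γ then
    2 ^ (γ - 2 * ℓ) * (γ.factorial : ℚ) ^ 3
      / (((γ - 2 * ℓ).factorial : ℚ) * ((ℓ.factorial : ℚ)) ^ 2)
  else 0

/-- Inequality (I2) in the final step of the proof of Aubin's theorem. -/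
theorem aubin_I2 (ω : ℕ) (hω : 1 ≤ ω) (T M N : ℕ → ℝ)
    (hT : ∀ ℓ : ℕ, ℓ ≤ (ω - 1) / 2 → 0 ≤ T ℓ)
    (hsym : ∀ ℓ : ℕ, ℓ ≤ (ω - 1) / 2 →
      2 * T ℓ + ((ω : ℝ) - 2 * ℓ) * (((ω : ℝ) - 2 * ℓ - 1) * N ℓ + 4 * M ℓ) = 0)
    (hpos : ∀ ℓ : ℕ, ℓ ≤ (ω - 1) / 2 →
      2 * T ℓ + ((ω : ℝ) - 2 * ℓ) * N ℓ ≥ 0) :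
    ∑ ℓ ∈ Finset.range ((ω - 1) / 2 + 1),
        ((dCoeff ω ℓ : ℚ) : ℝ) *
          ((((ω : ℝ) + 1) * ((ω : ℝ) - 2 * ℓ) - ((ω : ℝ) + 4)) * T ℓ
            - 2 * ((ω : ℝ) - 2 * ℓ) * ((ω : ℝ) + 2) * M ℓ)
      ≥ ∑ ℓ ∈ Finset.range ((ω - 1) / 2 + 1),
          2 * (ℓ : ℝ) * ((dCoeff ω ℓ : ℚ) : ℝ) * T ℓ := by
  apply Finset.sum_le_sum
  intro l hl
  rw [Finset.mem_range, Nat.lt_succ_iff] at hl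
  have hT' := hT l hl
  have hsym' := hsym l hl
  have hpos' := hpos l hl
  have hk : (1:ℝ) ≤ (ω:ℝ) - 2*l := by
    have h2 : 2*l + 1 ≤ ω := by omega
    have : ((2*l + 1 : ℕ) : ℝ) ≤ (ω : ℝ) := Nat.cast_le.mpr h2
    push_cast at this
    linarith
  have hd : 0 ≤ ((dCoeff ω l : ℚ) : ℝ) := by
    have : 0 ≤ dCoeff ω l := by
      unfold dCoeff
      split
      · positivity
      · exact le_refl 0
    exact_mod_cast this
  set d := ((dCoeff ω l : ℚ) : ℝ) with hdef
  set k := (ω:ℝ) - 2*l with hkdef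
  clear_value d k
  have key : (((ω : ℝ) + 1) * k - ((ω : ℝ) + 4)) * T l
      - 2 * k * ((ω : ℝ) + 2) * M l - 2 * (l : ℝ) * T l
      = ((ω:ℝ)+2) * (k-1) / 2 * (2 * T l + k * N l) := by
    have hl2 : 2 * (l:ℝ) = (ω:ℝ) - k := by rw [hkdef]; ring
    linear_combination (-((ω:ℝ)+2)/2) * hsym' - (T l) * hl2
  have hprod : 0 ≤ d * (((ω:ℝ)+2) * (k-1) / 2 * (2 * T l + k * N l)) := by
    apply mul_nonneg hd
    apply mul_nonneg
    · have : (0:ℝ) ≤ (ω:ℝ)+2 := by positivity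
      nlinarith
    · linarith
  have h2 : d * ((((ω : ℝ) + 1) * k - ((ω : ℝ) + 4)) * T l
      - 2 * k * ((ω : ℝ) + 2) * M l) - 2 * (l : ℝ) * d * T l
      = d * (((ω:ℝ)+2) * (k-1) / 2 * (2 * T l + k * N l)) := by
    linear_combination d * key
  nlinarith [hprod, h2]
end

section
/- Let ω ≥ 1 be a natural number and let T, M, N : ℕ → ℝ be sequences such that for every natural number ℓ with 0 ≤ ℓ ≤ ⌊(ω−1)/2⌋: T(ℓ) ≥ 0, 2·T(ℓ) + (ω−2ℓ)·((ω−2ℓ−1)·N(ℓ) + 4·M(ℓ)) = 0, and 2·T(ℓ) + (ω−2ℓ)·N(ℓ) ≥ 0. Then Σ_{ℓ=0}^{⌊(ω−1)/2⌋} 2ℓ·d(ω,ℓ)·( (ω(ω−2ℓ) − 4ℓ − 5)·T(ℓ) − 2(ω−2ℓ)(ω+2)·M(ℓ) ) ≥ − Σ_{ℓ=0}^{⌊(ω−1)/2⌋} 2ℓ·d(ω,ℓ)·T(ℓ). -/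
/-- Inequality (I1) in the final step of the proof of Aubin's theorem. -/
theorem aubin_I1 (ω : ℕ) (hω : 1 ≤ ω) (T M N : ℕ → ℝ)
    (hT : ∀ ℓ : ℕ, ℓ ≤ (ω - 1) / 2 → 0 ≤ T ℓ)
    (hsym : ∀ ℓ : ℕ, ℓ ≤ (ω - 1) / 2 →
      2 * T ℓ + ((ω : ℝ) - 2 * ℓ) * (((ω : ℝ) - 2 * ℓ - 1) * N ℓ + 4 * M ℓ) = 0)
    (hpos : ∀ ℓ : ℕ, ℓ ≤ (ω - 1) / 2 →
      2 * T ℓ + ((ω : ℝ) - 2 * ℓ) * N ℓ ≥ 0) :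
    ∑ ℓ ∈ Finset.range ((ω - 1) / 2 + 1),
        2 * (ℓ : ℝ) * ((dCoeff ω ℓ : ℚ) : ℝ) *
          (((ω : ℝ) * ((ω : ℝ) - 2 * ℓ) - 4 * ℓ - 5) * T ℓ
            - 2 * ((ω : ℝ) - 2 * ℓ) * ((ω : ℝ) + 2) * M ℓ)
      ≥ -∑ ℓ ∈ Finset.range ((ω - 1) / 2 + 1),
          2 * (ℓ : ℝ) * ((dCoeff ω ℓ : ℚ) : ℝ) * T ℓ := by
  have hd : ∀ ℓ : ℕ, 0 ≤ ((dCoeff ω ℓ : ℚ) : ℝ) := by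
    intro ℓ
    unfold dCoeff
    split
    · push_cast
      positivity
    · simp
  have key : ∀ ℓ ∈ Finset.range ((ω - 1) / 2 + 1),
      0 ≤ 2 * (ℓ : ℝ) * ((dCoeff ω ℓ : ℚ) : ℝ) *
          (((ω : ℝ) * ((ω : ℝ) - 2 * ℓ) - 4 * ℓ - 5) * T ℓ
            - 2 * ((ω : ℝ) - 2 * ℓ) * ((ω : ℝ) + 2) * M ℓ)
        + 2 * (ℓ : ℝ) * ((dCoeff ω ℓ : ℚ) : ℝ) * T ℓ := by
    intro ℓ hℓ
    rw [Finset.mem_range] at hℓ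
    have hℓ' : ℓ ≤ (ω - 1) / 2 := Nat.lt_succ_iff.mp hℓ
    have h2ℓ : 2 * ℓ + 1 ≤ ω := by omega
    have hx : (2 * ℓ : ℝ) + 1 ≤ (ω : ℝ) := by exact_mod_cast h2ℓ
    have hsymℓ := hsym ℓ hℓ'
    have hposℓ := hpos ℓ hℓ'
    have hTℓ := hT ℓ hℓ'
    have hA : 2 * ((((ω : ℝ) * ((ω : ℝ) - 2 * ℓ) - 4 * ℓ - 5) * T ℓ
            - 2 * ((ω : ℝ) - 2 * ℓ) * ((ω : ℝ) + 2) * M ℓ) + T ℓ)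
        = ((ω : ℝ) + 2) * (((ω : ℝ) - 2 * ℓ) - 1) *
            (2 * T ℓ + ((ω : ℝ) - 2 * ℓ) * N ℓ) := by
      linear_combination (-((ω : ℝ) + 2)) * hsymℓ
    have hfac : 0 ≤ ((ω : ℝ) + 2) * (((ω : ℝ) - 2 * ℓ) - 1) *
        (2 * T ℓ + ((ω : ℝ) - 2 * ℓ) * N ℓ) := by
      apply mul_nonneg
      · apply mul_nonneg <;> nlinarith
      · linarith
    have hℓd : 0 ≤ 2 * (ℓ : ℝ) * ((dCoeff ω ℓ : ℚ) : ℝ) := by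
      have : (0 : ℝ) ≤ ℓ := Nat.cast_nonneg ℓ
      have := hd ℓ
      positivity
    nlinarith [mul_nonneg hℓd hfac]
  have h := Finset.sum_nonneg key
  rw [Finset.sum_add_distrib] at h
  linarith
end

section
/- Let ω ≥ 1 be a natural number and let T, M, N : ℕ → ℝ be sequences such that for every natural number ℓ with 0 ≤ ℓ ≤ ⌊(ω−1)/2⌋: T(ℓ) ≥ 0, 2·T(ℓ) + (ω−2ℓ)·((ω−2ℓ−1)·N(ℓ) + 4·M(ℓ)) = 0, and 2·T(ℓ) + (ω−2ℓ)·N(ℓ) ≥ 0. Define ℐ₁ := Σ_{ℓ=0}^{⌊(ω−1)/2⌋} 2ℓ·d(ω,ℓ)·( (ω(ω−2ℓ) − 4ℓ − 5)·T(ℓ) − 2(ω−2ℓ)(ω+2)·M(ℓ) ) and ℐ₂ := Σ_{ℓ=0}^{⌊(ω−1)/2⌋} d(ω,ℓ)·( ((ω+1)(ω−2ℓ) − (ω+4))·T(ℓ) − 2(ω−2ℓ)(ω+2)·M(ℓ) ). Then ℐ₁ + ℐ₂ ≥ 0. -/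
lemma dCoeff_nonneg (γ ℓ : ℕ) : 0 ≤ dCoeff γ ℓ := by
  unfold dCoeff
  split
  · apply div_nonneg <;> positivity
  · exact le_refl 0

/-- The concluding positivity step of the proof of Aubin's theorem: `ℐ₁ + ℐ₂ ≥ 0`. -/
theorem aubin_I1_add_I2 (ω : ℕ) (hω : 1 ≤ ω) (T M N : ℕ → ℝ)
    (hT : ∀ ℓ : ℕ, ℓ ≤ (ω - 1) / 2 → 0 ≤ T ℓ)
    (hsym : ∀ ℓ : ℕ, ℓ ≤ (ω - 1) / 2 →
      2 * T ℓ + ((ω : ℝ) - 2 * ℓ) * (((ω : ℝ) - 2 * ℓ - 1) * N ℓ + 4 * M ℓ) = 0)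
    (hpos : ∀ ℓ : ℕ, ℓ ≤ (ω - 1) / 2 →
      2 * T ℓ + ((ω : ℝ) - 2 * ℓ) * N ℓ ≥ 0)
    (I₁ I₂ : ℝ)
    (hI₁ : I₁ = ∑ ℓ ∈ Finset.range ((ω - 1) / 2 + 1),
        2 * (ℓ : ℝ) * ((dCoeff ω ℓ : ℚ) : ℝ) *
          (((ω : ℝ) * ((ω : ℝ) - 2 * ℓ) - 4 * ℓ - 5) * T ℓ
            - 2 * ((ω : ℝ) - 2 * ℓ) * ((ω : ℝ) + 2) * M ℓ))
    (hI₂ : I₂ = ∑ ℓ ∈ Finset.range ((ω - 1) / 2 + 1),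
        ((dCoeff ω ℓ : ℚ) : ℝ) *
          ((((ω : ℝ) + 1) * ((ω : ℝ) - 2 * ℓ) - ((ω : ℝ) + 4)) * T ℓ
            - 2 * ((ω : ℝ) - 2 * ℓ) * ((ω : ℝ) + 2) * M ℓ)) :
    I₁ + I₂ ≥ 0 := by
  rw [hI₁, hI₂, ← Finset.sum_add_distrib]
  apply Finset.sum_nonneg
  intro ℓ hℓ
  have hℓ' : ℓ ≤ (ω - 1) / 2 := Nat.lt_succ_iff.mp (Finset.mem_range.mp hℓ)
  have hnk : 2 * ℓ + 1 ≤ ω := by omega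
  have hk : (1 : ℝ) ≤ (ω : ℝ) - 2 * ℓ := by
    have : ((2 * ℓ + 1 : ℕ) : ℝ) ≤ (ω : ℝ) := Nat.cast_le.mpr hnk
    push_cast at this; linarith
  set d : ℝ := ((dCoeff ω ℓ : ℚ) : ℝ) with hd_def
  have hd : 0 ≤ d := by
    rw [hd_def]; exact_mod_cast dCoeff_nonneg ω ℓ
  have hs := hsym ℓ hℓ'
  have hp := hpos ℓ hℓ'
  have heq : 2 * (ℓ : ℝ) * d *
          (((ω : ℝ) * ((ω : ℝ) - 2 * ℓ) - 4 * ℓ - 5) * T ℓ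
            - 2 * ((ω : ℝ) - 2 * ℓ) * ((ω : ℝ) + 2) * M ℓ)
      + d * ((((ω : ℝ) + 1) * ((ω : ℝ) - 2 * ℓ) - ((ω : ℝ) + 4)) * T ℓ
            - 2 * ((ω : ℝ) - 2 * ℓ) * ((ω : ℝ) + 2) * M ℓ)
      = d * (2 * ℓ + 1) * ((ω : ℝ) + 2) * (((ω : ℝ) - 2 * ℓ) - 1) / 2
          * (2 * T ℓ + ((ω : ℝ) - 2 * ℓ) * N ℓ) := by
    linear_combination (-(d * (2 * (ℓ : ℝ) + 1) * ((ω : ℝ) + 2) / 2)) * hs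
  rw [heq]
  have hc : 0 ≤ d * (2 * ℓ + 1) * ((ω : ℝ) + 2) * (((ω : ℝ) - 2 * ℓ) - 1) / 2 := by
    apply div_nonneg _ (by norm_num)
    apply mul_nonneg (mul_nonneg (mul_nonneg hd (by positivity)) (by positivity))
    linarith
  exact mul_nonneg hc hp
end

section
/- For every natural number ω, the following identity of rational numbers holds: (ω+2)·Σ_{k=ω}^{2ω} (k+1)·C(k,ω) = (ω+3)²·C(ω), where C(k,ω) is the binomial coefficient and C(ω) := (ω+1)²·(ω+2)²·(2ω+2)! / ((ω+3)!)². -/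
lemma comb1_sum_aux (ω n : ℕ) :
    ∑ k ∈ Finset.Icc ω n, (k + 1) * k.choose ω = (ω + 1) * (n + 2).choose (ω + 2) := by
  induction n with
  | zero =>
    rcases Nat.eq_zero_or_pos ω with h | h
    · subst h; simp
    · rw [Finset.Icc_eq_empty (by omega), Nat.choose_eq_zero_of_lt (by omega)]
      simp
  | succ n ih =>
    rcases le_or_gt ω (n + 1) with h | h
    · rw [Finset.sum_Icc_succ_top h, ih]
      have h1 : (n + 2) * (n + 1).choose ω = (n + 2).choose (ω + 1) * (ω + 1) :=
        Nat.add_one_mul_choose_eq (n + 1) ω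
      have h2 : (n + 3).choose (ω + 2) = (n + 2).choose (ω + 1) + (n + 2).choose (ω + 2) :=
        Nat.choose_succ_succ (n + 2) (ω + 1)
      have : (n + 1 + 2) = n + 3 := by omega
      rw [this, h2]
      linarith [h1]
    · rw [Finset.Icc_eq_empty (by omega), Nat.choose_eq_zero_of_lt (by omega)]
      simp

/-- Combinatorial identity (comb1): `(ω+2)·Σ_{k=ω}^{2ω} (k+1)·C(k,ω) = (ω+3)²·C(ω)`,
where `C(ω) = (ω+1)²(ω+2)²(2ω+2)!/((ω+3)!)²`. -/
theorem comb1 (ω : ℕ) :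
    ((ω : ℚ) + 2) * ∑ k ∈ Finset.Icc ω (2 * ω), ((k : ℚ) + 1) * (k.choose ω : ℚ)
      = ((ω : ℚ) + 3) ^ 2 *
        (((ω : ℚ) + 1) ^ 2 * ((ω : ℚ) + 2) ^ 2 * ((2 * ω + 2).factorial : ℚ)
          / (((ω + 3).factorial : ℚ)) ^ 2) := by
  have key := comb1_sum_aux ω (2 * ω)
  have hsum : (∑ k ∈ Finset.Icc ω (2 * ω), ((k : ℚ) + 1) * (k.choose ω : ℚ))
      = ((ω : ℚ) + 1) * ((2 * ω + 2).choose (ω + 2) : ℚ) := by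
    exact_mod_cast congrArg (Nat.cast : ℕ → ℚ) key
  have hch : ((2 * ω + 2).choose (ω + 2) : ℚ) * (((ω + 2).factorial : ℚ) * (ω.factorial : ℚ))
      = ((2 * ω + 2).factorial : ℚ) := by
    have h := Nat.choose_mul_factorial_mul_factorial (n := 2 * ω + 2) (k := ω + 2) (by omega)
    have hn : 2 * ω + 2 - (ω + 2) = ω := by omega
    rw [hn] at h
    push_cast [← h]; ring
  have hf3 : ((ω + 3).factorial : ℚ)
      = ((ω : ℚ) + 3) * ((ω : ℚ) + 2) * ((ω : ℚ) + 1) * (ω.factorial : ℚ) := by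
    have : (ω + 3).factorial = (ω + 3) * ((ω + 2) * ((ω + 1) * ω.factorial)) := rfl
    rw [this]; push_cast; ring
  have hf2 : ((ω + 2).factorial : ℚ)
      = ((ω : ℚ) + 2) * ((ω : ℚ) + 1) * (ω.factorial : ℚ) := by
    have : (ω + 2).factorial = (ω + 2) * ((ω + 1) * ω.factorial) := rfl
    rw [this]; push_cast; ring
  have hf0 : (ω.factorial : ℚ) ≠ 0 := Nat.cast_ne_zero.mpr (Nat.factorial_ne_zero ω)
  rw [hf2] at hch
  rw [hsum, hf3]
  field_simp
  linear_combination hch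
end

section
/- For every natural number ω, the following identity of rational numbers holds: (ω+2)·Σ_{k=ω}^{2ω−1} (k+1)·(2ω−k)·C(k,ω) = ω·(ω+3)·C(ω), where C(k,ω) is the binomial coefficient and C(ω) := (ω+1)²·(ω+2)²·(2ω+2)! / ((ω+3)!)² (for ω = 0 the sum is empty and both sides vanish). -/
lemma comb2_aux (w : ℕ) : ∀ n, w ≤ n →
    ∑ k ∈ Finset.Ico w n, ((k : ℚ) + 1) * (2 * (w : ℚ) - (k : ℚ)) * (k.choose w : ℚ)
      = (-((w : ℚ) + 2) * (n : ℚ) ^ 3 + (w : ℚ) * (3 * (w : ℚ) + 7) * (n : ℚ) ^ 2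
          + (-2 * (w : ℚ) ^ 3 - 3 * (w : ℚ) ^ 2 + 6 * (w : ℚ) + 2) * (n : ℚ)
          - 2 * (w : ℚ) * ((w : ℚ) ^ 2 + 3 * (w : ℚ) + 1)) * (n.choose w : ℚ)
        / (((w : ℚ) + 2) * ((w : ℚ) + 3)) := by
  intro n hn
  have h2 : ((w : ℚ) + 2) ≠ 0 := by positivity
  have h3 : ((w : ℚ) + 3) ≠ 0 := by positivity
  induction n, hn using Nat.le_induction with
  | base =>
      rw [Finset.Ico_self, Finset.sum_empty, Nat.choose_self]
      field_simp
      ring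
  | succ n hn ih =>
      rw [Finset.sum_Ico_succ_top hn, ih]
      have hwn : (w : ℚ) ≤ (n : ℚ) := by exact_mod_cast hn
      have hne : ((n : ℚ) + 1 - (w : ℚ)) ≠ 0 := by linarith
      have hb : (((n + 1).choose w : ℚ)) = ((n : ℚ) + 1) * (n.choose w : ℚ) / ((n : ℚ) + 1 - (w : ℚ)) := by
        rw [eq_div_iff hne]
        have h := Nat.choose_mul_succ_eq n w
        have hcast : ((n : ℚ) + 1 - (w : ℚ)) = ((n + 1 - w : ℕ) : ℚ) := by
          push_cast [Nat.cast_sub (show w ≤ n + 1 by omega)]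
          ring
        rw [hcast]
        have h' : (n + 1).choose w * (n + 1 - w) = (n + 1) * n.choose w := by rw [← h]; ring
        exact_mod_cast h'
      push_cast [hb]
      field_simp
      ring

/-- Combinatorial identity (comb2): `(ω+2)·Σ_{k=ω}^{2ω-1} (k+1)(2ω-k)·C(k,ω) = ω(ω+3)·C(ω)`,
where `C(ω) = (ω+1)²(ω+2)²(2ω+2)!/((ω+3)!)²` (for `ω = 0` the sum is empty). -/
theorem comb2 (ω : ℕ) :
    ((ω : ℚ) + 2) *
        ∑ k ∈ Finset.Ico ω (2 * ω), ((k : ℚ) + 1) * (2 * (ω : ℚ) - (k : ℚ)) * (k.choose ω : ℚ)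
      = (ω : ℚ) * ((ω : ℚ) + 3) *
        (((ω : ℚ) + 1) ^ 2 * ((ω : ℚ) + 2) ^ 2 * ((2 * ω + 2).factorial : ℚ)
          / (((ω + 3).factorial : ℚ)) ^ 2) := by
  rw [comb2_aux ω (2 * ω) (by omega)]
  have h2 : ((ω : ℚ) + 2) ≠ 0 := by positivity
  have h3 : ((ω : ℚ) + 3) ≠ 0 := by positivity
  have hf : ((ω.factorial : ℚ)) ≠ 0 := by exact_mod_cast ω.factorial_ne_zero
  have key : (2 * ω).choose ω * (ω.factorial) ^ 2 * ((2 * ω + 2) * (2 * ω + 1)) = (2 * ω + 2).factorial := by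
    have h := Nat.choose_mul_factorial_mul_factorial (show ω ≤ 2 * ω by omega)
    rw [show 2 * ω - ω = ω by omega] at h
    have e1 : (2 * ω + 2).factorial = (2 * ω + 2) * ((2 * ω + 1) * (2 * ω).factorial) := by
      rw [show 2 * ω + 2 = 2 * ω + 1 + 1 by omega, Nat.factorial_succ, Nat.factorial_succ]
    rw [e1, ← h]; ring
  have key2 : (ω + 3).factorial = (ω + 3) * ((ω + 2) * ((ω + 1) * ω.factorial)) := by
    rw [show ω + 3 = ω + 2 + 1 by omega, Nat.factorial_succ,
      show ω + 2 = ω + 1 + 1 by omega, Nat.factorial_succ, Nat.factorial_succ]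
  have hkey : ((2 * ω + 2).factorial : ℚ)
      = ((2 * ω).choose ω : ℚ) * ((ω.factorial : ℚ)) ^ 2 * ((2 * (ω : ℚ) + 2) * (2 * (ω : ℚ) + 1)) := by
    rw [← key]; push_cast; ring
  have hkey2 : ((ω + 3).factorial : ℚ)
      = ((ω : ℚ) + 3) * (((ω : ℚ) + 2) * (((ω : ℚ) + 1) * (ω.factorial : ℚ))) := by
    rw [key2]; push_cast; ring
  rw [hkey, hkey2]
  push_cast
  field_simp
  ring
end

section
/- For all natural numbers ω and ℓ with ω ≥ 2 and 2ℓ ≤ ω − 2, the following identity of rational numbers holds: (ω−1)!·(ω−2)!·Σ_{k=2ℓ}^{ω−2} 2^(ω−k−1)·(k+1)·d(k,ℓ) / (k!)² = e(ω,ℓ). -/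
/-- The rational coefficient `e(γ,ℓ) = 2^(γ-2ℓ-2)·γ!·(γ-1)!·(γ-2)! / ((γ-2ℓ-2)!·(ℓ+1)!·ℓ!)`
for `2ℓ+2 ≤ γ`, and `0` when `2ℓ+2 > γ`. -/
def eCoeff (γ ℓ : ℕ) : ℚ :=
  if 2 * ℓ + 2 ≤ γ then
    2 ^ (γ - 2 * ℓ - 2) * (γ.factorial : ℚ) * ((γ - 1).factorial : ℚ)
        * ((γ - 2).factorial : ℚ)
      / (((γ - 2 * ℓ - 2).factorial : ℚ) * ((ℓ + 1).factorial : ℚ) * (ℓ.factorial : ℚ))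
  else 0

lemma dCoeff_eq (ℓ m : ℕ) :
    dCoeff (2 * ℓ + m) ℓ =
      2 ^ m * ((2 * ℓ + m).factorial : ℚ) ^ 3
        / ((m.factorial : ℚ) * ((ℓ.factorial : ℚ)) ^ 2) := by
  unfold dCoeff
  rw [if_pos (by omega : 2 * ℓ ≤ 2 * ℓ + m)]
  have h : 2 * ℓ + m - 2 * ℓ = m := by omega
  rw [h]

lemma eCoeff_eq (ℓ m : ℕ) :
    eCoeff (2 * ℓ + m + 2) ℓ =
      2 ^ m * ((2 * ℓ + m + 2).factorial : ℚ) * ((2 * ℓ + m + 1).factorial : ℚ)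
          * ((2 * ℓ + m).factorial : ℚ)
        / ((m.factorial : ℚ) * ((ℓ + 1).factorial : ℚ) * (ℓ.factorial : ℚ)) := by
  unfold eCoeff
  rw [if_pos (by omega : 2 * ℓ + 2 ≤ 2 * ℓ + m + 2)]
  have h1 : 2 * ℓ + m + 2 - 1 = 2 * ℓ + m + 1 := by omega
  have h2 : 2 * ℓ + m + 2 - 2 = 2 * ℓ + m := by omega
  have h3 : 2 * ℓ + m + 2 - 2 * ℓ - 2 = m := by omega
  rw [h1, h2, h3]

lemma A5_key (ℓ m : ℕ) :
    ((2 * ℓ + m + 1).factorial : ℚ) * ((2 * ℓ + m).factorial : ℚ) *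
        ∑ k ∈ Finset.Icc (2 * ℓ) (2 * ℓ + m),
          2 ^ (2 * ℓ + m + 1 - k) * ((k : ℚ) + 1) * dCoeff k ℓ / ((k.factorial : ℚ)) ^ 2
      = eCoeff (2 * ℓ + m + 2) ℓ := by
  induction m with
  | zero =>
      simp only [Nat.add_zero]
      rw [Finset.Icc_self, Finset.sum_singleton]
      have hd := dCoeff_eq ℓ 0
      rw [Nat.add_zero] at hd
      rw [hd, eCoeff_eq ℓ 0]
      have h1 : 2 * ℓ + 0 + 1 - 2 * ℓ = 1 := by omega
      have hfac1 : ((2 * ℓ + 1).factorial : ℚ) = (2 * ℓ + 1) * (2 * ℓ).factorial := by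
        push_cast [Nat.factorial_succ]; ring
      have hfac2 : ((2 * ℓ + 0 + 2).factorial : ℚ) = (2 * ℓ + 2) * (2 * ℓ + 1) * (2 * ℓ).factorial := by
        push_cast [Nat.factorial_succ]; ring
      have hfac3 : ((ℓ + 1).factorial : ℚ) = (ℓ + 1) * ℓ.factorial := by
        push_cast [Nat.factorial_succ]; ring
      have hne : ((2 * ℓ).factorial : ℚ) ≠ 0 := Nat.cast_ne_zero.mpr (Nat.factorial_ne_zero _)
      have hne2 : (ℓ.factorial : ℚ) ≠ 0 := Nat.cast_ne_zero.mpr (Nat.factorial_ne_zero _)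
      have hne3 : ((ℓ : ℚ) + 1) ≠ 0 := by positivity
      rw [show (2 * ℓ + 0 + 1 : ℕ) = 2 * ℓ + 1 from by omega] at *
      rw [h1, hfac1, hfac2, hfac3]
      field_simp
      push_cast
      ring
  | succ m ih =>
      rw [show 2 * ℓ + (m + 1) = 2 * ℓ + m + 1 from by omega,
        Finset.sum_Icc_succ_top (by omega : 2 * ℓ ≤ 2 * ℓ + m + 1)]
      have hsplit : ∀ k ∈ Finset.Icc (2 * ℓ) (2 * ℓ + m),
          2 ^ (2 * ℓ + m + 1 + 1 - k) * ((k : ℚ) + 1) * dCoeff k ℓ / ((k.factorial : ℚ)) ^ 2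
          = 2 * (2 ^ (2 * ℓ + m + 1 - k) * ((k : ℚ) + 1) * dCoeff k ℓ / ((k.factorial : ℚ)) ^ 2) := by
        intro k hk
        rw [Finset.mem_Icc] at hk
        rw [show 2 * ℓ + m + 1 + 1 - k = (2 * ℓ + m + 1 - k) + 1 from by omega, pow_succ]
        ring
      rw [Finset.sum_congr rfl hsplit, ← Finset.mul_sum]
      have hS : ∑ k ∈ Finset.Icc (2 * ℓ) (2 * ℓ + m),
          2 ^ (2 * ℓ + m + 1 - k) * ((k : ℚ) + 1) * dCoeff k ℓ / ((k.factorial : ℚ)) ^ 2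
          = eCoeff (2 * ℓ + m + 2) ℓ
            / (((2 * ℓ + m + 1).factorial : ℚ) * ((2 * ℓ + m).factorial : ℚ)) := by
        rw [← ih]
        field_simp
      rw [hS]
      have hd := dCoeff_eq ℓ (m + 1)
      rw [show 2 * ℓ + (m + 1) = 2 * ℓ + m + 1 from by omega] at hd
      rw [show 2 * ℓ + m + 1 + 1 - (2 * ℓ + m + 1) = 1 from by omega, hd,
        eCoeff_eq ℓ m, show 2 * ℓ + m + 1 + 2 = 2 * ℓ + (m + 1) + 2 from by omega,
        eCoeff_eq ℓ (m + 1)]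
      have e1 : ((2 * ℓ + m + 2).factorial : ℚ) = (2 * ℓ + m + 2) * (2 * ℓ + m + 1).factorial := by
        push_cast [Nat.factorial_succ]; ring
      have e2 : ((2 * ℓ + m + 1).factorial : ℚ) = (2 * ℓ + m + 1) * (2 * ℓ + m).factorial := by
        push_cast [Nat.factorial_succ]; ring
      have e3 : ((2 * ℓ + (m + 1) + 2).factorial : ℚ)
          = (2 * ℓ + m + 3) * (2 * ℓ + m + 2) * (2 * ℓ + m + 1) * (2 * ℓ + m).factorial := by
        rw [show 2 * ℓ + (m + 1) + 2 = 2 * ℓ + m + 3 from by omega]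
        push_cast [Nat.factorial_succ, show 2 * ℓ + m + 3 = (2 * ℓ + m + 2) + 1 from by omega]
        ring
      have e4 : ((2 * ℓ + (m + 1) + 1).factorial : ℚ)
          = (2 * ℓ + m + 2) * (2 * ℓ + m + 1) * (2 * ℓ + m).factorial := by
        rw [show 2 * ℓ + (m + 1) + 1 = 2 * ℓ + m + 2 from by omega]
        push_cast [Nat.factorial_succ]; ring
      have e5 : ((2 * ℓ + (m + 1)).factorial : ℚ) = (2 * ℓ + m + 1) * (2 * ℓ + m).factorial := by
        rw [show 2 * ℓ + (m + 1) = 2 * ℓ + m + 1 from by omega]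
        push_cast [Nat.factorial_succ]; ring
      have e6 : ((m + 1).factorial : ℚ) = (m + 1) * m.factorial := by
        push_cast [Nat.factorial_succ]; ring
      have e7 : ((ℓ + 1).factorial : ℚ) = (ℓ + 1) * ℓ.factorial := by
        push_cast [Nat.factorial_succ]; ring
      rw [e1, e2, e3, e4, e5, e6, e7]
      have h1 : ((2 * ℓ + m).factorial : ℚ) ≠ 0 := Nat.cast_ne_zero.mpr (Nat.factorial_ne_zero _)
      have h2 : (m.factorial : ℚ) ≠ 0 := Nat.cast_ne_zero.mpr (Nat.factorial_ne_zero _)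
      have h3 : (ℓ.factorial : ℚ) ≠ 0 := Nat.cast_ne_zero.mpr (Nat.factorial_ne_zero _)
      have h4 : ((ℓ : ℚ) + 1) ≠ 0 := by positivity
      have h5 : ((m : ℚ) + 1) ≠ 0 := by positivity
      have h6 : (2 * (ℓ : ℚ) + m + 1) ≠ 0 := by positivity
      have h7 : (2 * (ℓ : ℚ) + m + 2) ≠ 0 := by positivity
      field_simp
      push_cast
      ring

/-- The closed form underlying equation (A-5) of the appendix:
`(ω-1)!·(ω-2)!·Σ_{k=2ℓ}^{ω-2} 2^(ω-k-1)·(k+1)·d(k,ℓ)/(k!)² = e(ω,ℓ)`. -/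
theorem A5_coefficient (ω ℓ : ℕ) (hω : 2 ≤ ω) (hℓ : 2 * ℓ ≤ ω - 2) :
    ((ω - 1).factorial : ℚ) * ((ω - 2).factorial : ℚ) *
        ∑ k ∈ Finset.Icc (2 * ℓ) (ω - 2),
          2 ^ (ω - k - 1) * ((k : ℚ) + 1) * dCoeff k ℓ / ((k.factorial : ℚ)) ^ 2
      = eCoeff ω ℓ := by
  obtain ⟨m, rfl⟩ : ∃ m, ω = 2 * ℓ + m + 2 := ⟨ω - 2 - 2 * ℓ, by omega⟩
  have h1 : 2 * ℓ + m + 2 - 1 = 2 * ℓ + m + 1 := by omega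
  have h2 : 2 * ℓ + m + 2 - 2 = 2 * ℓ + m := by omega
  rw [h1, h2, ← A5_key ℓ m]
  congr 1
  apply Finset.sum_congr rfl
  intro k hk
  rw [Finset.mem_Icc] at hk
  rw [show 2 * ℓ + m + 2 - k - 1 = 2 * ℓ + m + 1 - k from by omega]
end

section
/- For all natural numbers γ ≥ 2 and ℓ ≥ 1 with 2ℓ ≤ γ, the following identity of rational numbers holds: e(γ,ℓ−1) = 2(γ−1)(γ−2)·e(γ−1,ℓ−1) + 2(γ−1)²·d(γ−2,ℓ−1), where by convention e(γ−1,ℓ−1) := 0 when 2ℓ > γ−1 and d(γ−2,ℓ−1) := 0 when 2(ℓ−1) > γ−2. -/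
/-- The coefficient recurrence behind formula (T1,1):
`e(γ,ℓ-1) = 2(γ-1)(γ-2)·e(γ-1,ℓ-1) + 2(γ-1)²·d(γ-2,ℓ-1)`. -/
theorem e_recurrence (γ ℓ : ℕ) (hγ : 2 ≤ γ) (hℓ₁ : 1 ≤ ℓ) (hℓ : 2 * ℓ ≤ γ) :
    eCoeff γ (ℓ - 1)
      = 2 * ((γ : ℚ) - 1) * ((γ : ℚ) - 2) * eCoeff (γ - 1) (ℓ - 1)
        + 2 * ((γ : ℚ) - 1) ^ 2 * dCoeff (γ - 2) (ℓ - 1) := by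
  obtain ⟨k, rfl⟩ : ∃ k, ℓ = k + 1 := ⟨ℓ - 1, by omega⟩
  obtain ⟨a, rfl⟩ : ∃ a, γ = 2 * k + 2 + a := ⟨γ - (2 * k + 2), by omega⟩
  have hk : k + 1 - 1 = k := rfl
  have hkf : (k.factorial : ℚ) ≠ 0 := Nat.cast_ne_zero.2 (Nat.factorial_ne_zero k)
  have hk1f : ((k + 1).factorial : ℚ) ≠ 0 := Nat.cast_ne_zero.2 (Nat.factorial_ne_zero _)
  have f3 : ((k + 1).factorial : ℚ) = (k + 1) * k.factorial := by
    rw [Nat.factorial_succ]; push_cast; ring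
  rcases a with _ | b
  · simp only [hk, eCoeff, dCoeff]
    rw [if_pos (by omega), if_neg (by omega), if_pos (by omega)]
    have e1 : 2 * k + 2 + 0 - 2 * k - 2 = 0 := by omega
    have e2 : 2 * k + 2 + 0 - 1 = 2 * k + 1 := by omega
    have e3 : 2 * k + 2 + 0 - 2 = 2 * k := by omega
    have e4 : 2 * k - 2 * k = 0 := by omega
    rw [e1, e2, e3, e4]
    have f1 : ((2 * k + 2).factorial : ℚ) = (2 * k + 2) * (2 * k + 1) * (2 * k).factorial := by
      rw [show 2 * k + 2 = (2 * k + 1) + 1 from rfl, Nat.factorial_succ, Nat.factorial_succ]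
      push_cast; ring
    have f2 : ((2 * k + 1).factorial : ℚ) = (2 * k + 1) * (2 * k).factorial := by
      rw [Nat.factorial_succ]; push_cast; ring
    rw [f1, f2, f3]
    push_cast
    field_simp
    ring
  · simp only [hk, eCoeff, dCoeff]
    rw [if_pos (by omega), if_pos (by omega), if_pos (by omega)]
    have e1 : 2 * k + 2 + (b + 1) - 2 * k - 2 = b + 1 := by omega
    have e2 : 2 * k + 2 + (b + 1) - 1 = 2 * k + 2 + b := by omega
    have e3 : 2 * k + 2 + (b + 1) - 2 = 2 * k + 1 + b := by omega
    have e4 : 2 * k + 2 + b - 2 * k - 2 = b := by omega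
    have e5 : 2 * k + 2 + b - 1 = 2 * k + 1 + b := by omega
    have e6 : 2 * k + 2 + b - 2 = 2 * k + b := by omega
    have e7 : 2 * k + 1 + b - 2 * k = b + 1 := by omega
    rw [e1, e2, e3, e4, e5, e6, e7]
    have g1 : ((2 * k + 2 + (b + 1)).factorial : ℚ)
        = (2 * k + 3 + b) * (2 * k + 2 + b).factorial := by
      rw [show 2 * k + 2 + (b + 1) = (2 * k + 2 + b) + 1 by omega, Nat.factorial_succ]
      push_cast; ring
    have g2 : ((2 * k + 2 + b).factorial : ℚ)
        = (2 * k + 2 + b) * (2 * k + 1 + b).factorial := by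
      rw [show 2 * k + 2 + b = (2 * k + 1 + b) + 1 by omega, Nat.factorial_succ]
      push_cast; ring
    have g3 : ((2 * k + 1 + b).factorial : ℚ)
        = (2 * k + 1 + b) * (2 * k + b).factorial := by
      rw [show 2 * k + 1 + b = (2 * k + b) + 1 by omega, Nat.factorial_succ]
      push_cast; ring
    have g4 : ((b + 1).factorial : ℚ) = (b + 1) * b.factorial := by
      rw [Nat.factorial_succ]; push_cast; ring
    rw [g1, g2, g3, g4, f3]
    have hbf : (b.factorial : ℚ) ≠ 0 := Nat.cast_ne_zero.2 (Nat.factorial_ne_zero b)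
    push_cast
    field_simp
    ring
end
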